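/- arXiv:1812.04531 — 2 statements merged into one kernel-verified Lean document; each statement's English description precedes it below -/
import Mathlib

section
/- Let k and n be positive integers and let d_1, d_2 ∈ A_k. If the bottom row of d_1 does not match the top row of d_2, then φ_k(x_{d_2}) ∘ φ_k(x_{d_1}) = 0. If the bottom row of d_1 matches the top row of d_2, then φ_k(x_{d_2}) ∘ φ_k(x_{d_1}) = Σ_d (n − |d|)_{[d_1∘d_2]} · φ_k(x_d), where the sum runs over all set partitions d obtained from d_1 ∘ d_2 by choosing an injective (possibly empty) partial matching between the blocks of d_1 contained entirely in {1,…,k} and the blocks of d_2 contained entirely in {1′,…,k′} and merging each matched pair into a single block. -/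
open scoped Classical
open Matrix

noncomputable section

namespace Tanabe

/-! ## Tensor space model of `V^{⊗k}` for `V = ℂ^n`.
A tensor is encoded by its coordinates, i.e. a function `(Fin k → Fin n) → ℂ`;
the basis vector `v_{i_1} ⊗ ⋯ ⊗ v_{i_k}` corresponds to the indicator function
of the tuple `(i_1, …, i_k)`. -/

abbrev TP (n k : ℕ) : Type := (Fin k → Fin n) → ℂ

/-- The linear endomorphism of `V^{⊗k}` with matrix `K` in the standard basis:
it sends the basis vector indexed by the tuple `i` to `∑ₒ K o i • (basis vector o)`. -/
def kernelMap (n k : ℕ) (K : (Fin k → Fin n) → (Fin k → Fin n) → ℂ) :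
    TP n k →ₗ[ℂ] TP n k where
  toFun f := fun o => ∑ i : Fin k → Fin n, K o i * f i
  map_add' f g := by
    funext o
    simp only [Pi.add_apply, mul_add]
    exact Finset.sum_add_distrib
  map_smul' c f := by
    funext o
    simp only [Pi.smul_apply, smul_eq_mul, RingHom.id_apply]
    rw [Finset.mul_sum]
    exact Finset.sum_congr rfl fun i _ => by ring

/-- The diagonal (tensor-power) action `g^{⊗k}` of a matrix `g` on `V^{⊗k}`. -/
def tensorPow (n k : ℕ) (g : Matrix (Fin n) (Fin n) ℂ) : TP n k →ₗ[ℂ] TP n k :=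
  kernelMap n k fun o i => ∏ t : Fin k, g (o t) (i t)

/-! ## Set partitions of `{1,…,t,1′,…,t′}`.
A set partition of `{1,…,t,1′,…,t′}` is encoded as a `Setoid` on `Fin t ⊕ Fin t`,
with `Sum.inl` the unprimed (top row) elements and `Sum.inr` the primed (bottom row)
elements; blocks are the equivalence classes. -/

abbrev SP (t : ℕ) : Type := Setoid (Fin t ⊕ Fin t)

/-- `N(B)`: number of top-row (unprimed) elements in the block `q` of `d`. -/
def topCt {t : ℕ} (d : SP t) (q : Quotient d) : ℕ :=
  Nat.card {a : Fin t // Quotient.mk d (Sum.inl a) = q}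

/-- `M(B)`: number of bottom-row (primed) elements in the block `q` of `d`. -/
def botCt {t : ℕ} (d : SP t) (q : Quotient d) : ℕ :=
  Nat.card {a : Fin t // Quotient.mk d (Sum.inr a) = q}

/-- `|d|`: the number of blocks of `d`. -/
def nBlocks {t : ℕ} (d : SP t) : ℕ := Nat.card (Quotient d)

/-- Coefficient of `φ_t(x_d)`: equals `1` if the equalities among the values of the
combined tuple `c` are *exactly* those prescribed by `d`, and `0` otherwise. -/
def coeX (n t : ℕ) (d : SP t) (c : Fin t ⊕ Fin t → Fin n) : ℂ :=
  if ∀ a b : Fin t ⊕ Fin t, d.r a b ↔ c a = c b then 1 else 0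

/-- Coefficient of `φ_t(d)` (the diagram basis): equals `1` if the values of the
combined tuple `c` agree on each block of `d`, and `0` otherwise. -/
def coeD (n t : ℕ) (d : SP t) (c : Fin t ⊕ Fin t → Fin n) : ℂ :=
  if ∀ a b : Fin t ⊕ Fin t, d.r a b → c a = c b then 1 else 0

/-- The operator `φ_t(x_d)` on `V^{⊗t}`. -/
def phiX (n t : ℕ) (d : SP t) : TP n t →ₗ[ℂ] TP n t :=
  kernelMap n t fun o i => coeX n t d (Sum.elim i o)

/-- The operator `φ_t(d)` on `V^{⊗t}` (diagram basis). -/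
def phiD (n t : ℕ) (d : SP t) : TP n t →ₗ[ℂ] TP n t :=
  kernelMap n t fun o i => coeD n t d (Sum.elim i o)

/-- `d ∈ Π_t(r)` : every block `B` satisfies `N(B) ≡ M(B) (mod r)`. -/
def inPi (r : ℕ) {t : ℕ} (d : SP t) : Prop :=
  ∀ q : Quotient d, (topCt d q : ℤ) ≡ (botCt d q : ℤ) [ZMOD (r : ℤ)]

/-- `d ∈ Λ_t(r,p,n)` (here `m = r/p`). -/
def inLambda (r p n : ℕ) {t : ℕ} (d : SP t) : Prop :=
  nBlocks d = n ∧
  (∀ q : Quotient d,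
    ((topCt d q : ℤ) ≡ (botCt d q : ℤ) [ZMOD ((r / p : ℕ) : ℤ)]) ∧
    ¬ ((topCt d q : ℤ) ≡ (botCt d q : ℤ) [ZMOD (r : ℤ)])) ∧
  (∀ q q' : Quotient d,
    (topCt d q : ℤ) - (botCt d q : ℤ) ≡ (topCt d q' : ℤ) - (botCt d q' : ℤ) [ZMOD (r : ℤ)])

/-- `d ∈ Θ_t(r,p,n)` (here `m = r/p`). -/
def inTheta (r p n : ℕ) {t : ℕ} (d : SP t) : Prop :=
  n < nBlocks d ∧
  (∀ q : Quotient d, (topCt d q : ℤ) ≡ (botCt d q : ℤ) [ZMOD ((r / p : ℕ) : ℤ)]) ∧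
  ∃ q : Quotient d, ¬ ((topCt d q : ℤ) ≡ (botCt d q : ℤ) [ZMOD (r : ℤ)])

/-- `d ∈ A_t(r,p,n) = Π_t(r) ∪ Λ_t(r,p,n) ∪ Θ_t(r,p,n)`. -/
def inA (r p n : ℕ) {t : ℕ} (d : SP t) : Prop :=
  inPi r d ∨ inLambda r p n d ∨ inTheta r p n d

/-- `d ∈ A_{k+1/2}` : `k+1` and `(k+1)′` lie in the same block. -/
def isHalf (k : ℕ) (d : SP (k + 1)) : Prop :=
  d.r (Sum.inl (Fin.last k)) (Sum.inr (Fin.last k))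

/-- `d ∈ Π_t(r,p,n)` : `d ∈ A_t(r,p,n)` with at most `n` blocks. -/
def inPiRPN (r p n : ℕ) {t : ℕ} (d : SP t) : Prop :=
  inA r p n d ∧ nBlocks d ≤ n

/-- `{φ_k(x_d) : d ∈ A_k(r,p,n)}`. -/
def TanSet (r p n k : ℕ) : Set (TP n k →ₗ[ℂ] TP n k) :=
  {T | ∃ d : SP k, inA r p n d ∧ T = phiX n k d}

/-- `{φ_{k+1}(x_d) : d ∈ A_{k+1/2}(r,p,n)}` (as endomorphisms of `V^{⊗(k+1)}`). -/
def TanSetHalf (r p n k : ℕ) : Set (TP n (k + 1) →ₗ[ℂ] TP n (k + 1)) :=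
  {T | ∃ d : SP (k + 1), (inA r p n d ∧ isHalf k d) ∧ T = phiX n (k + 1) d}

/-! ## The groups `G(r,p,n)` and `L(r,p,n)` as matrix groups. -/

/-- The monomial matrix with underlying permutation `π` and weights `a` :
its `(i,j)` entry is `a j` if `i = π j` and `0` otherwise, so that it maps
`v_j ↦ a j • v_{π j}`. -/
def monoMat (n : ℕ) (π : Equiv.Perm (Fin n)) (a : Fin n → ℂ) :
    Matrix (Fin n) (Fin n) ℂ :=
  Matrix.of fun i j => if i = π j then a j else 0

/-- `G(r,p,n)` as a set of matrices: matrices with exactly one nonzero entry in each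
row and column, whose nonzero entries are `r`-th roots of unity, and such that the
`m = r/p`-th power of the product of the nonzero entries is `1`. -/
def GSet (r p n : ℕ) : Set (Matrix (Fin n) (Fin n) ℂ) :=
  {g | ∃ (π : Equiv.Perm (Fin n)) (a : Fin n → ℂ),
    (∀ i, a i ^ r = 1) ∧ (∏ i, a i) ^ (r / p) = 1 ∧ g = monoMat n π a}

/-- The last index of `Fin n` (position `n` in 1-indexed notation). -/
def lastIdx (n : ℕ) (hn : 0 < n) : Fin n := ⟨n - 1, by omega⟩

/-- `L(r,p,n)` as a set of matrices: elements of `G(r,p,n)` whose `(n,n)` entry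
is nonzero. -/
def LSet (r p n : ℕ) (hn : 0 < n) : Set (Matrix (Fin n) (Fin n) ℂ) :=
  {g | g ∈ GSet r p n ∧ g (lastIdx n hn) (lastIdx n hn) ≠ 0}

/-- The centralizer algebra `End_{G(r,p,n)}(V^{⊗k})`. -/
def centG (r p n k : ℕ) : Set (TP n k →ₗ[ℂ] TP n k) :=
  {F | ∀ g ∈ GSet r p n, F ∘ₗ tensorPow n k g = tensorPow n k g ∘ₗ F}

/-- The subspace `W = V^{⊗k} ⊗ ℂ v_n` of `V^{⊗(k+1)}` : coordinate functions
supported on tuples whose last entry is the last index. -/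
def Wsub (n k : ℕ) (hn : 0 < n) : Submodule ℂ (TP n (k + 1)) where
  carrier := {f | ∀ j : Fin (k + 1) → Fin n, j (Fin.last k) ≠ lastIdx n hn → f j = 0}
  add_mem' := by
    intro a b ha hb j hj
    simp [Pi.add_apply, ha j hj, hb j hj]
  zero_mem' := by intro j hj; rfl
  smul_mem' := by
    intro c a ha j hj
    simp [Pi.smul_apply, ha j hj]


/-! ## Group structure -/

abbrev GLn (n : ℕ) := Matrix.GeneralLinearGroup (Fin n) ℂ

lemma monoMat_mul (n : ℕ) (π σ : Equiv.Perm (Fin n)) (a b : Fin n → ℂ) :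
    monoMat n π a * monoMat n σ b = monoMat n (π * σ) (fun j => a (σ j) * b j) := by
  ext i j
  simp only [monoMat, Matrix.mul_apply, Matrix.of_apply, mul_ite, mul_zero, ite_mul, zero_mul]
  rw [Finset.sum_ite_eq' Finset.univ (σ j)]
  simp [Equiv.Perm.mul_apply]
  congr

lemma monoMat_one (n : ℕ) : monoMat n 1 (fun _ => (1 : ℂ)) = 1 := by
  ext i j
  simp [monoMat, Matrix.one_apply]
  congr

lemma one_mem_GSet (r p n : ℕ) : (1 : Matrix (Fin n) (Fin n) ℂ) ∈ GSet r p n :=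
  ⟨1, fun _ => 1, fun _ => one_pow r, by simp, (monoMat_one n).symm⟩

lemma mul_mem_GSet {r p n : ℕ} {g h : Matrix (Fin n) (Fin n) ℂ}
    (hg : g ∈ GSet r p n) (hh : h ∈ GSet r p n) : g * h ∈ GSet r p n := by
  obtain ⟨π, a, ha, hpa, rfl⟩ := hg
  obtain ⟨σ, b, hb, hpb, rfl⟩ := hh
  refine ⟨π * σ, fun j => a (σ j) * b j, fun i => by rw [mul_pow, ha, hb, one_mul], ?_,
    monoMat_mul n π σ a b⟩
  have h1 : (∏ i, (a (σ i) * b i)) = (∏ i, a i) * ∏ i, b i := by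
    rw [Finset.prod_mul_distrib, Equiv.prod_comp σ a]
  rw [h1, mul_pow, hpa, hpb, one_mul]

lemma a_ne_zero {r : ℕ} (hr : 0 < r) {a : ℂ} (ha : a ^ r = 1) : a ≠ 0 := by
  intro h0
  rw [h0, zero_pow hr.ne'] at ha
  exact zero_ne_one ha

lemma monoMat_mul_inv (n : ℕ) (π : Equiv.Perm (Fin n)) (a : Fin n → ℂ)
    (ha : ∀ i, a i ≠ 0) :
    monoMat n π a * monoMat n π⁻¹ (fun j => (a (π⁻¹ j))⁻¹) = 1 := by
  simp only [monoMat_mul]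
  rw [mul_inv_cancel,
    show (fun j => a (π⁻¹ j) * (a (π⁻¹ j))⁻¹) = fun _ : Fin n => (1 : ℂ) from
      funext fun j => mul_inv_cancel₀ (ha _),
    monoMat_one]

/-- The value of the inverse of a unit whose underlying matrix is a monomial matrix. -/
lemma gl_inv_val {n : ℕ} (g : GLn n) (π : Equiv.Perm (Fin n)) (a : Fin n → ℂ)
    (ha : ∀ i, a i ≠ 0) (hg : (↑g : Matrix (Fin n) (Fin n) ℂ) = monoMat n π a) :
    (↑g⁻¹ : Matrix (Fin n) (Fin n) ℂ) = monoMat n π⁻¹ (fun j => (a (π⁻¹ j))⁻¹) := by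
  have hmul : (↑g : Matrix (Fin n) (Fin n) ℂ) *
      monoMat n π⁻¹ (fun j => (a (π⁻¹ j))⁻¹) = 1 := by
    rw [hg]; exact monoMat_mul_inv n π a ha
  calc (↑g⁻¹ : Matrix (Fin n) (Fin n) ℂ)
      = ↑g⁻¹ * ((↑g : Matrix (Fin n) (Fin n) ℂ) *
          monoMat n π⁻¹ (fun j => (a (π⁻¹ j))⁻¹)) := by rw [hmul, mul_one]
    _ = ((↑g⁻¹ : Matrix (Fin n) (Fin n) ℂ) * ↑g) *
          monoMat n π⁻¹ (fun j => (a (π⁻¹ j))⁻¹) := by rw [mul_assoc]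
    _ = monoMat n π⁻¹ (fun j => (a (π⁻¹ j))⁻¹) := by
          rw [← Units.val_mul, inv_mul_cancel, Units.val_one, one_mul]

lemma inv_mem_GSet {r p n : ℕ} (hr : 0 < r) {g : GLn n}
    (hg : (↑g : Matrix (Fin n) (Fin n) ℂ) ∈ GSet r p n) :
    (↑g⁻¹ : Matrix (Fin n) (Fin n) ℂ) ∈ GSet r p n := by
  obtain ⟨π, a, ha, hpa, hgm⟩ := hg
  have hane : ∀ i, a i ≠ 0 := fun i => a_ne_zero hr (ha i)
  refine ⟨π⁻¹, fun j => (a (π⁻¹ j))⁻¹, fun i => by rw [inv_pow, ha, inv_one], ?_,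
    gl_inv_val g π a hane hgm⟩
  rw [Finset.prod_inv_distrib, Equiv.prod_comp π⁻¹ a, inv_pow, hpa, inv_one]

/-- The complex reflection group `G(r,p,n)` as a subgroup of `GL_n(ℂ)`. -/
def GGroup (r p n : ℕ) (hr : 0 < r) : Subgroup (GLn n) where
  carrier := {g | (↑g : Matrix (Fin n) (Fin n) ℂ) ∈ GSet r p n}
  one_mem' := by
    show (↑(1 : GLn n) : Matrix (Fin n) (Fin n) ℂ) ∈ GSet r p n
    rw [Units.val_one]; exact one_mem_GSet r p n
  mul_mem' := by
    intro g h hg hh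
    show (↑(g * h) : Matrix (Fin n) (Fin n) ℂ) ∈ GSet r p n
    rw [Units.val_mul]; exact mul_mem_GSet hg hh
  inv_mem' := by
    intro g hg
    exact inv_mem_GSet hr hg

lemma monoMat_last {n : ℕ} (hn : 0 < n) (π : Equiv.Perm (Fin n)) (a : Fin n → ℂ)
    (h : monoMat n π a (lastIdx n hn) (lastIdx n hn) ≠ 0) :
    π (lastIdx n hn) = lastIdx n hn ∧ a (lastIdx n hn) ≠ 0 := by
  by_cases hp : lastIdx n hn = π (lastIdx n hn)
  · refine ⟨hp.symm, ?_⟩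
    intro h0
    apply h
    simp [monoMat, ← hp, h0]
  · exfalso; apply h; simp [monoMat, hp]

lemma monoMat_last_entry {n : ℕ} (hn : 0 < n) (π : Equiv.Perm (Fin n)) (a : Fin n → ℂ)
    (hp : π (lastIdx n hn) = lastIdx n hn) :
    monoMat n π a (lastIdx n hn) (lastIdx n hn) = a (lastIdx n hn) := by
  simp [monoMat, hp]

/-- The subgroup `L(r,p,n)` of `G(r,p,n)` (matrices with nonzero `(n,n)` entry). -/
def LGroup (r p n : ℕ) (hr : 0 < r) (hn : 0 < n) : Subgroup (GLn n) where
  carrier := {g | (↑g : Matrix (Fin n) (Fin n) ℂ) ∈ LSet r p n hn}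
  one_mem' := by
    refine ⟨?_, ?_⟩
    · show (↑(1 : GLn n) : Matrix (Fin n) (Fin n) ℂ) ∈ GSet r p n
      rw [Units.val_one]; exact one_mem_GSet r p n
    · rw [Units.val_one]
      simp [Matrix.one_apply]
  mul_mem' := by
    rintro g h ⟨hg, hge⟩ ⟨hh, hhe⟩
    refine ⟨?_, ?_⟩
    · show (↑(g * h) : Matrix (Fin n) (Fin n) ℂ) ∈ GSet r p n
      rw [Units.val_mul]; exact mul_mem_GSet hg hh
    · obtain ⟨π, a, ha, hpa, hgm⟩ := hg
      obtain ⟨σ, b, hb, hpb, hhm⟩ := hh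
      rw [hgm] at hge
      rw [hhm] at hhe
      obtain ⟨hπ, ha0⟩ := monoMat_last hn π a hge
      obtain ⟨hσ, hb0⟩ := monoMat_last hn σ b hhe
      rw [Units.val_mul, hgm, hhm, monoMat_mul]
      rw [monoMat_last_entry hn _ _ (by simp [Equiv.Perm.mul_apply, hσ, hπ])]
      simp only [hσ]
      exact mul_ne_zero ha0 hb0
  inv_mem' := by
    rintro g ⟨hg, hge⟩
    obtain ⟨π, a, ha, hpa, hgm⟩ := hg
    have hane : ∀ i, a i ≠ 0 := fun i => a_ne_zero hr (ha i)
    rw [hgm] at hge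
    obtain ⟨hπ, ha0⟩ := monoMat_last hn π a hge
    refine ⟨inv_mem_GSet hr ⟨π, a, ha, hpa, hgm⟩, ?_⟩
    rw [gl_inv_val g π a hane hgm]
    have hπi : π⁻¹ (lastIdx n hn) = lastIdx n hn := by
      conv_lhs => rw [← hπ]
      simp
    rw [monoMat_last_entry hn _ _ hπi]
    simp only [hπi]
    exact inv_ne_zero ha0

lemma GGroup_le (r p n : ℕ) (hr : 0 < r) : GGroup r p n hr ≤ GGroup r 1 n hr := by
  rintro g ⟨π, a, ha, hpa, hgm⟩
  refine ⟨π, a, ha, ?_, hgm⟩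
  rw [Nat.div_one, ← Finset.prod_pow]
  simp [ha]

lemma LGroup_le (r p n : ℕ) (hr : 0 < r) (hn : 0 < n) :
    LGroup r p n hr hn ≤ LGroup r 1 n hr hn := by
  rintro g ⟨hg, hge⟩
  exact ⟨GGroup_le r p n hr hg, hge⟩

lemma LGroup_le_GGroup (r p n : ℕ) (hr : 0 < r) (hn : 0 < n) :
    LGroup r p n hr hn ≤ GGroup r p n hr := fun _ hg => hg.1

lemma LGroup_le_G1 (r p n : ℕ) (hr : 0 < r) (hn : 0 < n) :
    LGroup r p n hr hn ≤ GGroup r 1 n hr :=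
  le_trans (LGroup_le_GGroup r p n hr hn) (GGroup_le r p n hr)

/-! ## Representation-theoretic notions -/

section Reps

variable {G : Type*} [Monoid G] {V : Type*} [AddCommGroup V] [Module ℂ V]

/-- A submodule invariant under a representation. -/
def RepInvariant (ρ : Representation ℂ G V) (q : Submodule ℂ V) : Prop :=
  ∀ (g : G), ∀ v ∈ q, ρ g v ∈ q

/-- Irreducibility of a representation. -/
def RepIrreducible (ρ : Representation ℂ G V) : Prop :=
  Nontrivial V ∧ ∀ q : Submodule ℂ V, RepInvariant ρ q → q = ⊥ ∨ q = ⊤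

/-- Irreducibility of an invariant subspace, as a subrepresentation. -/
def SubIrreducible (ρ : Representation ℂ G V) (q : Submodule ℂ V) : Prop :=
  q ≠ ⊥ ∧ ∀ q' : Submodule ℂ V, q' ≤ q → RepInvariant ρ q' → q' = ⊥ ∨ q' = q

/-- Two (invariant) subspaces are isomorphic as subrepresentations: there is a
`ℂ`-linear equivalence between them intertwining the action. -/
def IsSubrepIso (ρ : Representation ℂ G V) (q q' : Submodule ℂ V) : Prop :=
  ∃ e : q ≃ₗ[ℂ] q', ∀ (g : G) (x : V) (hx : x ∈ q) (hgx : ρ g x ∈ q),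
    ((e ⟨ρ g x, hgx⟩ : q') : V) = ρ g ((e ⟨x, hx⟩ : q') : V)

/-- A representation is multiplicity free: it is an (internal) direct sum of
pairwise non-isomorphic irreducible subrepresentations. -/
def RepMultFree (ρ : Representation ℂ G V) : Prop :=
  ∃ (ι : Type) (_ : Fintype ι) (W : ι → Submodule ℂ V),
    (∀ i, RepInvariant ρ (W i)) ∧
    (∀ i, SubIrreducible ρ (W i)) ∧
    iSupIndep W ∧ (⨆ i, W i) = ⊤ ∧
    (∀ i j, i ≠ j → ¬ IsSubrepIso ρ (W i) (W j))

/-- Restriction of a representation of `K` to a subgroup `H ≤ K`. -/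
def restrictRep {G : Type*} [Group G] {H K : Subgroup G} (h : H ≤ K)
    (ρ : Representation ℂ ↥K V) : Representation ℂ ↥H V :=
  MonoidHom.comp ρ (Subgroup.inclusion h)

end Reps

/-! ## The elements `ζ_i^l ζ_j^{-l} s_{ij}` and the central elements `κ` -/

/-- `ζ = exp(2πi/r)`, a primitive `r`-th root of unity. -/
def zeta (r : ℕ) : ℂ := Complex.exp (2 * Real.pi * Complex.I / r)

lemma zeta_pow_self {r : ℕ} (hr : 0 < r) : zeta r ^ r = 1 := by
  rw [zeta, ← Complex.exp_nat_mul]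
  rw [show (r : ℂ) * (2 * Real.pi * Complex.I / r) = 2 * Real.pi * Complex.I by
    rw [mul_div_assoc']
    exact mul_div_cancel_left₀ _ (Nat.cast_ne_zero.mpr hr.ne')]
  exact Complex.exp_two_pi_mul_I

lemma zeta_ne_zero (r : ℕ) : zeta r ≠ 0 := Complex.exp_ne_zero _

/-- Weights of the monomial matrix `ζ_i^l ζ_j^{-l} s_{ij}` : `ζ^l` in position `i`,
`ζ^{-l}` in position `j`, `1` elsewhere. -/
def zijWt (r l : ℕ) {n : ℕ} (i j : Fin n) : Fin n → ℂ :=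
  fun t => if t = i then zeta r ^ l else if t = j then (zeta r ^ l)⁻¹ else 1

/-- The matrix `ζ_i^l ζ_j^{-l} s_{ij}`. -/
def zijMat (n r l : ℕ) (i j : Fin n) : Matrix (Fin n) (Fin n) ℂ :=
  monoMat n (Equiv.swap i j) (zijWt r l i j)

lemma zijWt_ne_zero (r l : ℕ) {n : ℕ} (i j : Fin n) (t : Fin n) :
    zijWt r l i j t ≠ 0 := by
  unfold zijWt
  split_ifs
  · exact pow_ne_zero _ (zeta_ne_zero r)
  · exact inv_ne_zero (pow_ne_zero _ (zeta_ne_zero r))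
  · exact one_ne_zero

lemma zijWt_pow {r l : ℕ} (hr : 0 < r) {n : ℕ} (i j : Fin n) (t : Fin n) :
    zijWt r l i j t ^ r = 1 := by
  unfold zijWt
  split_ifs
  · rw [← pow_mul, mul_comm, pow_mul, zeta_pow_self hr, one_pow]
  · rw [inv_pow, ← pow_mul, mul_comm, pow_mul, zeta_pow_self hr, one_pow, inv_one]
  · exact one_pow r

lemma zijWt_prod {r l : ℕ} {n : ℕ} {i j : Fin n} (hij : i ≠ j) :
    (∏ t, zijWt r l i j t) = 1 := by
  have hfun : (fun t => zijWt r l i j t) =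
      fun t => (if t = i then zeta r ^ l else 1) * (if t = j then (zeta r ^ l)⁻¹ else 1) := by
    funext t
    by_cases h1 : t = i <;> by_cases h2 : t = j
    · exact absurd (h1.symm.trans h2) hij
    · simp [zijWt, h1, h2, hij]
    · simp [zijWt, h1, h2, hij, Ne.symm hij]
    · simp [zijWt, h1, h2]
  rw [hfun, Finset.prod_mul_distrib, Finset.prod_ite_eq' Finset.univ i,
    Finset.prod_ite_eq' Finset.univ j]
  simp [mul_inv_cancel₀ (pow_ne_zero l (zeta_ne_zero r))]

lemma zij_mem_GSet (r p n l : ℕ) (hr : 0 < r) (i j : Fin n) (hij : i ≠ j) :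
    zijMat n r l i j ∈ GSet r p n := by
  refine ⟨Equiv.swap i j, zijWt r l i j, zijWt_pow hr i j, ?_, rfl⟩
  rw [zijWt_prod hij, one_pow]

/-- A monomial matrix with nonzero weights, as an element of `GL_n(ℂ)`. -/
def monoUnit (n : ℕ) (π : Equiv.Perm (Fin n)) (a : Fin n → ℂ) (ha : ∀ i, a i ≠ 0) :
    GLn n where
  val := monoMat n π a
  inv := monoMat n π⁻¹ (fun j => (a (π⁻¹ j))⁻¹)
  val_inv := monoMat_mul_inv n π a ha
  inv_val := by
    simp only [monoMat_mul]
    rw [inv_mul_cancel,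
      show (fun j => (a (π⁻¹ (π j)))⁻¹ * a j) = fun _ : Fin n => (1 : ℂ) from
        funext fun j => by rw [show π⁻¹ (π j) = j from Equiv.Perm.inv_eq_iff_eq.mpr rfl, inv_mul_cancel₀ (ha _)],
      monoMat_one]

/-- The element `ζ_i^l ζ_j^{-l} s_{ij}` of `G(r,p,n)`. -/
def zijG (r p n l : ℕ) (hr : 0 < r) (i j : Fin n) (hij : i ≠ j) : ↥(GGroup r p n hr) :=
  ⟨monoUnit n (Equiv.swap i j) (zijWt r l i j) (zijWt_ne_zero r l i j),
   zij_mem_GSet r p n l hr i j hij⟩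

/-- The element `κ_{r,n} = (1/r)·Σ_{l<r} Σ_{i<j} ζ_i^l ζ_j^{-l} s_{ij}` of the group
algebra `ℂ[G(r,p,n)]`. -/
def kappaGA (r p n : ℕ) (hr : 0 < r) : MonoidAlgebra ℂ ↥(GGroup r p n hr) :=
  (1 / (r : ℂ)) • ∑ l ∈ Finset.range r, ∑ i : Fin n, ∑ j : Fin n,
    if h : i < j then MonoidAlgebra.single (zijG r p n l hr i j h.ne) 1 else 0

lemma zijL_last (r l : ℕ) {n : ℕ} (hn : 0 < n) (i j : Fin n)
    (hi : i ≠ lastIdx n hn) (hj : j ≠ lastIdx n hn) :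
    zijMat n r l i j (lastIdx n hn) (lastIdx n hn) ≠ 0 := by
  have hswap : Equiv.swap i j (lastIdx n hn) = lastIdx n hn :=
    Equiv.swap_apply_of_ne_of_ne (Ne.symm hi) (Ne.symm hj)
  rw [zijMat, monoMat_last_entry hn _ _ hswap]
  exact zijWt_ne_zero r l i j _

/-- The element `ζ_i^l ζ_j^{-l} s_{ij}` of `L(r,p,n)`, for `i, j ≤ n-1`. -/
def zijL (r p n l : ℕ) (hr : 0 < r) (hn : 0 < n) (i j : Fin n) (hij : i ≠ j)
    (hi : i ≠ lastIdx n hn) (hj : j ≠ lastIdx n hn) : ↥(LGroup r p n hr hn) :=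
  ⟨monoUnit n (Equiv.swap i j) (zijWt r l i j) (zijWt_ne_zero r l i j),
   ⟨zij_mem_GSet r p n l hr i j hij, zijL_last r l hn i j hi hj⟩⟩

/-- The element `κ_{r,n-1} = (1/r)·Σ_{l<r} Σ_{1≤i<j≤n-1} ζ_i^l ζ_j^{-l} s_{ij}` of the
group algebra `ℂ[L(r,p,n)]`. -/
def kappaLA (r p n : ℕ) (hr : 0 < r) (hn : 0 < n) :
    MonoidAlgebra ℂ ↥(LGroup r p n hr hn) :=
  (1 / (r : ℂ)) • ∑ l ∈ Finset.range r, ∑ i : Fin n, ∑ j : Fin n,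
    if h : i < j ∧ (j : ℕ) < n - 1 then
      MonoidAlgebra.single
        (zijL r p n l hr hn i j h.1.ne
          (by
            refine Fin.ne_of_val_ne ?_
            have h1 : (i : ℕ) < (j : ℕ) := h.1
            have h2 : (j : ℕ) < n - 1 := h.2
            show (i : ℕ) ≠ n - 1
            omega)
          (by
            refine Fin.ne_of_val_ne ?_
            have h2 : (j : ℕ) < n - 1 := h.2
            show (j : ℕ) ≠ n - 1
            omega)) 1
    else 0

/-! ## The induced representation of statement on `Ind_L^G σ` -/

/-- The right regular representation of a group `G` on the space of functions
`G → ℂ`, given by `(x · f)(g) = f(g x)`. -/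
def regRep (G : Type*) [Group G] : Representation ℂ G (G → ℂ) where
  toFun x :=
    { toFun := fun f => fun g => f (g * x)
      map_add' := fun f g => rfl
      map_smul' := fun c f => rfl }
  map_one' := by
    refine LinearMap.ext fun f => ?_
    funext g
    simp
  map_mul' x y := by
    refine LinearMap.ext fun f => ?_
    funext g
    simp [Module.End.mul_apply, mul_assoc]

/-- The space of functions `f : G(r,p,n) → ℂ` with `f(hg) = σ(h)·f(g)` for all
`h ∈ L(r,p,n)`, where `σ(h)` is the `(n,n)` entry of `h`. -/
def IndSig (r p n : ℕ) (hr : 0 < r) (hn : 0 < n) :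
    Submodule ℂ (↥(GGroup r p n hr) → ℂ) where
  carrier := {f | ∀ h g : ↥(GGroup r p n hr),
    ((h : GLn n) : Matrix (Fin n) (Fin n) ℂ) ∈ LSet r p n hn →
    f (h * g) = ((h : GLn n) : Matrix (Fin n) (Fin n) ℂ) (lastIdx n hn) (lastIdx n hn) * f g}
  add_mem' := by
    intro a b ha hb h g hh
    simp [ha h g hh, hb h g hh, mul_add]
  zero_mem' := by intro h g hh; simp
  smul_mem' := by
    intro c a ha h g hh
    simp [ha h g hh]
    ring

lemma IndSig_invariant (r p n : ℕ) (hr : 0 < r) (hn : 0 < n) :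
    RepInvariant (regRep ↥(GGroup r p n hr)) (IndSig r p n hr hn) := by
  intro x f hf h g hh
  show f ((h * g) * x) = _ * f (g * x)
  rw [mul_assoc]
  exact hf h (g * x) hh

/-- The natural representation of `G(r,p,n)` on `ℂ^n` by matrix-vector
multiplication. -/
def natRep (r p n : ℕ) (hr : 0 < r) : Representation ℂ ↥(GGroup r p n hr) (Fin n → ℂ) where
  toFun g := Matrix.mulVecLin ((g : GLn n) : Matrix (Fin n) (Fin n) ℂ)
  map_one' := by
    simp only [OneMemClass.coe_one, Units.val_one, Matrix.mulVecLin_one]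
    rfl
  map_mul' g h := by
    simp only [Subgroup.coe_mul, Units.val_mul, Matrix.mulVecLin_mul]
    rw [Module.End.mul_eq_comp]

/-! ## The operators `Z_{t,r}` and `Z_{t+1/2,r}` -/

/-- `S ∪ S′` as a finite subset of `Fin t ⊕ Fin t`. -/
def SSfin {t : ℕ} (S : Finset (Fin t)) : Finset (Fin t ⊕ Fin t) :=
  Finset.univ.filter fun x => Sum.elim (· ∈ S) (· ∈ S) x

/-- The set partition `b_S` with blocks `S ∪ S′` and `{l,l′}` for `l ∉ S`. -/
def bS {t : ℕ} (S : Finset (Fin t)) : SP t :=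
  Setoid.ker fun x : Fin t ⊕ Fin t =>
    if x ∈ SSfin S then (none : Option (Fin t ⊕ Fin t)) else some x

/-- The set partition `d_I` with blocks `I`, `(S ∪ S′) \ I` and `{l,l′}` for `l ∉ S`. -/
def dI {t : ℕ} (S : Finset (Fin t)) (I : Finset (Fin t ⊕ Fin t)) : SP t :=
  Setoid.ker fun x : Fin t ⊕ Fin t =>
    if x ∈ I then (Sum.inl true : Bool ⊕ (Fin t ⊕ Fin t))
    else if x ∈ SSfin S then Sum.inl false else Sum.inr x

/-- `N(I)` : the number of top-row (unprimed) elements of `I`. -/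
def NIc {t : ℕ} (I : Finset (Fin t ⊕ Fin t)) : ℕ :=
  (I.filter fun x => x.isLeft = true).card

/-- `M(I)` : the number of bottom-row (primed) elements of `I`. -/
def MIc {t : ℕ} (I : Finset (Fin t ⊕ Fin t)) : ℕ :=
  (I.filter fun x => x.isRight = true).card

/-- The operator `Z_{t,r}` on `V^{⊗t}`.  The inner sum over unordered partitions
`{I, (S∪S′)∖I}` (each counted once) is written as `1/2` times the sum over ordered
proper nonempty subsets `I` of `S ∪ S′`; these agree since `d_I = d_{(S∪S′)∖I}` and
the signs coincide. -/
def Zop (r n t : ℕ) : TP n t →ₗ[ℂ] TP n t :=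
  (n.choose 2 : ℂ) • LinearMap.id +
  ∑ S ∈ (Finset.univ : Finset (Fin t)).powerset.filter (fun S => S ≠ ∅),
    ((-1 : ℂ) ^ S.card) •
      (((n : ℂ) - 1) • phiD n t (bS S) +
        (1 / 2 : ℂ) •
          ∑ I ∈ (SSfin S).powerset.filter (fun I =>
              I ≠ ∅ ∧ I ≠ SSfin S ∧ ((NIc I : ℤ) ≡ (MIc I : ℤ) [ZMOD (r : ℤ)])),
            ((-1 : ℂ) ^ ((NIc I : ℤ) - (MIc I : ℤ))) • (phiD n t (dI S I) - phiD n t (bS S)))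

/-- The operator `Z_{k+1/2,r}` on `V^{⊗(k+1)}`; as in `Zop`, but for `S` containing
`k+1` the inner sum is restricted to partitions in which `k+1` and `(k+1)′` lie in the
same part. -/
def ZopHalf (r n k : ℕ) : TP n (k + 1) →ₗ[ℂ] TP n (k + 1) :=
  (n.choose 2 : ℂ) • LinearMap.id +
  ∑ S ∈ (Finset.univ : Finset (Fin (k + 1))).powerset.filter (fun S => S ≠ ∅),
    ((-1 : ℂ) ^ S.card) •
      (((n : ℂ) - 1) • phiD n (k + 1) (bS S) +
        (1 / 2 : ℂ) •
          ∑ I ∈ (SSfin S).powerset.filter (fun I =>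
              I ≠ ∅ ∧ I ≠ SSfin S ∧ ((NIc I : ℤ) ≡ (MIc I : ℤ) [ZMOD (r : ℤ)]) ∧
              (Fin.last k ∈ S →
                ((Sum.inl (Fin.last k) : Fin (k+1) ⊕ Fin (k+1)) ∈ I ↔
                  (Sum.inr (Fin.last k) : Fin (k+1) ⊕ Fin (k+1)) ∈ I))),
            ((-1 : ℂ) ^ ((NIc I : ℤ) - (MIc I : ℤ))) •
              (phiD n (k + 1) (dI S I) - phiD n (k + 1) (bS S)))

/-- The diagonal action of `κ_{r,n}` on `V^{⊗k}`. -/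
def kappaOpFull (r n k : ℕ) : TP n k →ₗ[ℂ] TP n k :=
  (1 / (r : ℂ)) • ∑ l ∈ Finset.range r, ∑ i : Fin n, ∑ j : Fin n,
    if i < j then tensorPow n k (zijMat n r l i j) else 0

/-- The diagonal action of `κ_{r,n-1}` on `V^{⊗(k+1)}`. -/
def kappaOpL (r n k : ℕ) : TP n (k + 1) →ₗ[ℂ] TP n (k + 1) :=
  (1 / (r : ℂ)) • ∑ l ∈ Finset.range r, ∑ i : Fin n, ∑ j : Fin n,
    if i < j ∧ (j : ℕ) < n - 1 then tensorPow n (k + 1) (zijMat n r l i j) else 0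

/-- `w ⊗ v_n ∈ V^{⊗(k+1)}` for `w ∈ V^{⊗k}`. -/
def extendLast (n k : ℕ) (hn : 0 < n) (w : TP n k) : TP n (k + 1) :=
  fun j => if j (Fin.last k) = lastIdx n hn then w (fun t => j t.castSucc) else 0

/-- `A ⊗ Id_{V^{⊗(l-j)}}` : the extension of an operator on `V^{⊗j}` to `V^{⊗l}`,
acting on the first `j` tensor factors. -/
def extendOp (n j l : ℕ) (hjl : j ≤ l) (A : TP n j →ₗ[ℂ] TP n j) :
    TP n l →ₗ[ℂ] TP n l where
  toFun f := fun u =>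
    A (fun x : Fin j → Fin n =>
        f (fun t : Fin l => if h : (t : ℕ) < j then x ⟨t, h⟩ else u t))
      (fun s : Fin j => u (Fin.castLE hjl s))
  map_add' f g := by
    funext u
    show A (fun x : Fin j → Fin n =>
        (f + g) (fun t : Fin l => if h : (t : ℕ) < j then x ⟨t, h⟩ else u t))
      (fun s : Fin j => u (Fin.castLE hjl s)) =
      A (fun x : Fin j → Fin n =>
        f (fun t : Fin l => if h : (t : ℕ) < j then x ⟨t, h⟩ else u t))
      (fun s : Fin j => u (Fin.castLE hjl s)) +
      A (fun x : Fin j → Fin n =>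
        g (fun t : Fin l => if h : (t : ℕ) < j then x ⟨t, h⟩ else u t))
      (fun s : Fin j => u (Fin.castLE hjl s))
    have h : (fun x : Fin j → Fin n =>
        (f + g) (fun t : Fin l => if h : (t : ℕ) < j then x ⟨t, h⟩ else u t)) =
      (fun x : Fin j → Fin n =>
        f (fun t : Fin l => if h : (t : ℕ) < j then x ⟨t, h⟩ else u t)) +
      (fun x : Fin j → Fin n =>
        g (fun t : Fin l => if h : (t : ℕ) < j then x ⟨t, h⟩ else u t)) := rfl
    rw [h, map_add]
    rfl
  map_smul' c f := by
    funext u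
    show A (fun x : Fin j → Fin n =>
        (c • f) (fun t : Fin l => if h : (t : ℕ) < j then x ⟨t, h⟩ else u t))
      (fun s : Fin j => u (Fin.castLE hjl s)) =
      c • (A (fun x : Fin j → Fin n =>
        f (fun t : Fin l => if h : (t : ℕ) < j then x ⟨t, h⟩ else u t))
      (fun s : Fin j => u (Fin.castLE hjl s)))
    have h : (fun x : Fin j → Fin n =>
        (c • f) (fun t : Fin l => if h : (t : ℕ) < j then x ⟨t, h⟩ else u t)) =
      c • (fun x : Fin j → Fin n =>
        f (fun t : Fin l => if h : (t : ℕ) < j then x ⟨t, h⟩ else u t)) := rfl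
    rw [h, _root_.map_smul]
    rfl

/-! ## Diagram multiplication (statement of the structure constants) -/

/-- The bottom row of `d₁` matches the top row of `d₂`. -/
def rowMatch (k : ℕ) (d1 d2 : SP k) : Prop :=
  ∀ i j : Fin k, d1.r (Sum.inr i) (Sum.inr j) ↔ d2.r (Sum.inl i) (Sum.inl j)

/-- Extend a setoid on `α` along an injection `e : α → β` by singleton classes on
the complement of the range. -/
def extendSetoid {α β : Type*} (e : α → β) (he : Function.Injective e)
    (d : Setoid α) : Setoid β where
  r x y := x = y ∨ ∃ a b, d.r a b ∧ x = e a ∧ y = e b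
  iseqv := by
    constructor
    · intro x; exact Or.inl rfl
    · rintro x y (rfl | ⟨a, b, hab, rfl, rfl⟩)
      · exact Or.inl rfl
      · exact Or.inr ⟨b, a, d.iseqv.symm hab, rfl, rfl⟩
    · rintro x y z (rfl | ⟨a, b, hab, rfl, rfl⟩) h2
      · exact h2
      · rcases h2 with rfl | ⟨a', b', hab', hy, rfl⟩
        · exact Or.inr ⟨a, b, hab, rfl, rfl⟩
        · have hba : b = a' := he hy
          exact Or.inr ⟨a, b', d.iseqv.trans hab (hba ▸ hab'), rfl, rfl⟩

/-- The three-row vertex set: top row, middle row, bottom row. -/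
abbrev T3 (k : ℕ) : Type := Fin k ⊕ (Fin k ⊕ Fin k)

/-- `d₁` placed on the top and middle rows. -/
def embT (k : ℕ) : Fin k ⊕ Fin k → T3 k := Sum.map id Sum.inl

/-- `d₂` placed on the middle and bottom rows. -/
def embB (k : ℕ) : Fin k ⊕ Fin k → T3 k := Sum.inr

/-- The outer (top and bottom) rows. -/
def embO (k : ℕ) : Fin k ⊕ Fin k → T3 k := Sum.map id Sum.inr

lemma embT_inj (k : ℕ) : Function.Injective (embT k) :=
  Function.Injective.sumMap Function.injective_id Sum.inl_injective

/-- The stacked three-row diagram : the join of `d₁` (on top∪middle) and `d₂`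
(on middle∪bottom); its classes are the connected components. -/
def stacked (k : ℕ) (d1 d2 : SP k) : Setoid (T3 k) :=
  extendSetoid (embT k) (embT_inj k) d1 ⊔ extendSetoid (embB k) Sum.inr_injective d2

/-- The concatenation `d₁ ∘ d₂`, i.e. the restriction of the stacked diagram to the
outer rows. -/
def compSetoid (k : ℕ) (d1 d2 : SP k) : SP k :=
  Setoid.comap (embO k) (stacked k d1 d2)

/-- `[d₁ ∘ d₂]` : the number of connected components of the stacked diagram contained
entirely in the middle row. -/
def midCount (k : ℕ) (d1 d2 : SP k) : ℕ :=
  Nat.card {q : Quotient (stacked k d1 d2) //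
    ∀ x : T3 k, Quotient.mk (stacked k d1 d2) x = q → ∃ i : Fin k, x = Sum.inr (Sum.inl i)}

/-- A block entirely contained in the top row. -/
def topOnly {k : ℕ} (d : SP k) (q : Quotient d) : Prop :=
  ∀ x, Quotient.mk d x = q → ∃ i : Fin k, x = Sum.inl i

/-- A block entirely contained in the bottom row. -/
def botOnly {k : ℕ} (d : SP k) (q : Quotient d) : Prop :=
  ∀ x, Quotient.mk d x = q → ∃ i : Fin k, x = Sum.inr i

/-- `x` lies in the block merged from the pair `pr = (q₁, q₂)`. -/
def memPair {k : ℕ} (d1 d2 : SP k) : Fin k ⊕ Fin k → Quotient d1 × Quotient d2 → Prop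
  | Sum.inl i, pr => Quotient.mk d1 (Sum.inl i) = pr.1
  | Sum.inr i, pr => Quotient.mk d2 (Sum.inr i) = pr.2

/-- `d` is obtained from `d₁ ∘ d₂` by choosing an injective partial matching between
the top-only blocks of `d₁` and the bottom-only blocks of `d₂` and merging each
matched pair into a single block. -/
def IsCoarsening (k : ℕ) (d1 d2 d : SP k) : Prop :=
  ∃ P : Finset (Quotient d1 × Quotient d2),
    (∀ pr ∈ P, topOnly d1 pr.1 ∧ botOnly d2 pr.2) ∧
    (∀ pr ∈ P, ∀ pr' ∈ P, pr.1 = pr'.1 → pr = pr') ∧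
    (∀ pr ∈ P, ∀ pr' ∈ P, pr.2 = pr'.2 → pr = pr') ∧
    (∀ x y : Fin k ⊕ Fin k, d.r x y ↔
      ((compSetoid k d1 d2).r x y ∨ ∃ pr ∈ P, memPair d1 d2 x pr ∧ memPair d1 d2 y pr))

/-- The (integer) falling factorial `(a)_b = a(a-1)⋯(a-b+1)`. -/
def fallingC (a : ℤ) (b : ℕ) : ℤ := ∏ i ∈ Finset.range b, (a - i)

/-! ## The elements `c₁, c₂` of `G(2,2,2k)` and the operator `M_{k,2,2}` -/

/-- The underlying function of the permutation `(1 2)(3 4)⋯(2k-1 2k)` of `Fin (2k)`: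
it swaps `2t` and `2t+1` (0-indexed) for each `t < k`. -/
def pairFn (k : ℕ) : Fin (2 * k) → Fin (2 * k) := fun x =>
  if _ : (x : ℕ) % 2 = 0 then ⟨(x : ℕ) + 1, by have := x.2; omega⟩
  else ⟨(x : ℕ) - 1, by have := x.2; omega⟩

lemma pairFn_invol (k : ℕ) : Function.Involutive (pairFn k) := by
  intro x
  unfold pairFn
  split_ifs with h1 h2 h3
  · refine Fin.ext ?_; simp only [Fin.val_mk] at h2 ⊢; omega
  · refine Fin.ext ?_; simp only [Fin.val_mk] at h2 ⊢; omega
  · refine Fin.ext ?_; simp only [Fin.val_mk] at h3 ⊢; omega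
  · refine Fin.ext ?_; simp only [Fin.val_mk] at h3 ⊢; omega

/-- The permutation `(1 2)(3 4)⋯(2k-1 2k)` of `Fin (2k)`. -/
def pairPerm (k : ℕ) : Equiv.Perm (Fin (2 * k)) :=
  Function.Involutive.toPerm (pairFn k) (pairFn_invol k)

/-- `c₂` : the permutation matrix of `(1 2)(3 4)⋯(2k-1 2k)`. -/
def c2Mat (k : ℕ) : Matrix (Fin (2 * k)) (Fin (2 * k)) ℂ :=
  monoMat (2 * k) (pairPerm k) (fun _ => 1)

/-- The diagonal matrix `diag(-1,-1,1,…,1)`. -/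
def dMat (k : ℕ) : Matrix (Fin (2 * k)) (Fin (2 * k)) ℂ :=
  Matrix.diagonal fun t => if (t : ℕ) < 2 then (-1 : ℂ) else 1

/-- `c₁ = D · c₂`. -/
def c1Mat (k : ℕ) : Matrix (Fin (2 * k)) (Fin (2 * k)) ℂ := dMat k * c2Mat k

/-- Two matrices are conjugate by an element of `G(r,p,n)`. -/
def conjIn (r p n : ℕ) (c x : Matrix (Fin n) (Fin n) ℂ) : Prop :=
  ∃ g ∈ GSet r p n, g * c = x * g

/-- The conjugacy class of `c` in `G(r,p,n)`. -/
def conjClass (r p n : ℕ) (c : Matrix (Fin n) (Fin n) ℂ) :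
    Set (Matrix (Fin n) (Fin n) ℂ) :=
  {h | h ∈ GSet r p n ∧ conjIn r p n c h}

/-- The set partition of `{1,…,k,1′,…,k′}` all of whose blocks are singletons. -/
def singletonSP (k : ℕ) : SP k := ⟨Eq, eq_equivalence⟩

/-- The operator `M_{k,2,2} = φ_k(x_{d₀})` on `(ℂ^{2k})^{⊗k}`, where `d₀` is the set
partition with all blocks singletons. -/
def Mop (k : ℕ) : TP (2 * k) k →ₗ[ℂ] TP (2 * k) k :=
  phiX (2 * k) k (singletonSP k)

section Statement6Aux

variable {k n : ℕ}

/-- Explicit description of the stacked relation when rows match. -/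
def S0r (d1 d2 : SP k) : T3 k → T3 k → Prop
  | Sum.inl a, Sum.inl b => d1.r (Sum.inl a) (Sum.inl b)
  | Sum.inl a, Sum.inr (Sum.inl t) => d1.r (Sum.inl a) (Sum.inr t)
  | Sum.inl a, Sum.inr (Sum.inr b) =>
      ∃ t, d1.r (Sum.inl a) (Sum.inr t) ∧ d2.r (Sum.inl t) (Sum.inr b)
  | Sum.inr (Sum.inl t), Sum.inl a => d1.r (Sum.inr t) (Sum.inl a)
  | Sum.inr (Sum.inl t), Sum.inr (Sum.inl s) => d1.r (Sum.inr t) (Sum.inr s)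
  | Sum.inr (Sum.inl t), Sum.inr (Sum.inr b) => d2.r (Sum.inl t) (Sum.inr b)
  | Sum.inr (Sum.inr b), Sum.inl a =>
      ∃ t, d1.r (Sum.inl a) (Sum.inr t) ∧ d2.r (Sum.inl t) (Sum.inr b)
  | Sum.inr (Sum.inr b), Sum.inr (Sum.inl t) => d2.r (Sum.inl t) (Sum.inr b)
  | Sum.inr (Sum.inr a), Sum.inr (Sum.inr b) => d2.r (Sum.inr a) (Sum.inr b)

variable {d1 d2 : SP k}

lemma S0r_refl : ∀ x, S0r d1 d2 x x
  | Sum.inl _ => d1.iseqv.refl _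
  | Sum.inr (Sum.inl _) => d1.iseqv.refl _
  | Sum.inr (Sum.inr _) => d2.iseqv.refl _

lemma S0r_symm : ∀ {x y}, S0r d1 d2 x y → S0r d1 d2 y x
  | Sum.inl _, Sum.inl _, h => d1.iseqv.symm h
  | Sum.inl _, Sum.inr (Sum.inl _), h => d1.iseqv.symm h
  | Sum.inl _, Sum.inr (Sum.inr _), h => h
  | Sum.inr (Sum.inl _), Sum.inl _, h => d1.iseqv.symm h
  | Sum.inr (Sum.inl _), Sum.inr (Sum.inl _), h => d1.iseqv.symm h
  | Sum.inr (Sum.inl _), Sum.inr (Sum.inr _), h => h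
  | Sum.inr (Sum.inr _), Sum.inl _, h => h
  | Sum.inr (Sum.inr _), Sum.inr (Sum.inl _), h => h
  | Sum.inr (Sum.inr _), Sum.inr (Sum.inr _), h => d2.iseqv.symm h

lemma S0r_trans (hm : rowMatch k d1 d2) {x y z : T3 k}
    (hxy : S0r d1 d2 x y) (hyz : S0r d1 d2 y z) : S0r d1 d2 x z := by
  have t1 : ∀ {a b c}, d1.r a b → d1.r b c → d1.r a c := fun h1 h2 => d1.iseqv.trans h1 h2
  have s1 : ∀ {a b}, d1.r a b → d1.r b a := fun h => d1.iseqv.symm h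
  have t2 : ∀ {a b c}, d2.r a b → d2.r b c → d2.r a c := fun h1 h2 => d2.iseqv.trans h1 h2
  have s2 : ∀ {a b}, d2.r a b → d2.r b a := fun h => d2.iseqv.symm h
  have h12 : ∀ t s, d1.r (Sum.inr t) (Sum.inr s) → d2.r (Sum.inl t) (Sum.inl s) :=
    fun t s h => (hm t s).mp h
  have h21 : ∀ t s, d2.r (Sum.inl t) (Sum.inl s) → d1.r (Sum.inr t) (Sum.inr s) :=
    fun t s h => (hm t s).mpr h
  rcases x with a | t | b <;> rcases y with a' | t' | b' <;> rcases z with a'' | t'' | b'' <;>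
    simp only [S0r] at hxy hyz ⊢
  · exact t1 hxy hyz
  · exact t1 hxy hyz
  · obtain ⟨t, h1, h2⟩ := hyz; exact ⟨t, t1 hxy h1, h2⟩
  · exact t1 hxy hyz
  · exact t1 hxy hyz
  · exact ⟨t', hxy, hyz⟩
  · obtain ⟨t, h1, h2⟩ := hxy; obtain ⟨s, h3, h4⟩ := hyz
    exact t1 h1 (t1 (h21 _ _ (t2 h2 (s2 h4))) (s1 h3))
  · obtain ⟨t, h1, h2⟩ := hxy
    exact t1 h1 (h21 _ _ (t2 h2 (s2 hyz)))
  · obtain ⟨t, h1, h2⟩ := hxy; exact ⟨t, h1, t2 h2 hyz⟩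
  · exact t1 hxy hyz
  · exact t1 hxy hyz
  · obtain ⟨s, h3, h4⟩ := hyz
    exact t2 (h12 _ _ (t1 hxy h3)) h4
  · exact t1 hxy hyz
  · exact t1 hxy hyz
  · exact t2 (h12 _ _ hxy) hyz
  · obtain ⟨s, h3, h4⟩ := hyz
    exact t1 (h21 _ _ (t2 hxy (s2 h4))) (s1 h3)
  · exact h21 _ _ (t2 hxy (s2 hyz))
  · exact t2 hxy hyz
  · obtain ⟨t, h1, h2⟩ := hxy; exact ⟨t, t1 (s1 hyz) h1, h2⟩
  · obtain ⟨t, h1, h2⟩ := hxy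
    exact t2 (s2 (h12 _ _ (t1 (s1 h1) hyz))) h2
  · obtain ⟨t, h1, h2⟩ := hxy; obtain ⟨s, h3, h4⟩ := hyz
    exact t2 (s2 h2) (t2 (h12 _ _ (t1 (s1 h1) h3)) h4)
  · exact ⟨t', s1 hyz, hxy⟩
  · exact t2 (s2 (h12 _ _ hyz)) hxy
  · exact t2 (s2 hxy) hyz
  · obtain ⟨s, h3, h4⟩ := hyz; exact ⟨s, h3, t2 h4 (s2 hxy)⟩
  · exact t2 hyz (s2 hxy)
  · exact t2 hxy hyz

/-- `S0r` bundled as a setoid. -/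
def S0 (hm : rowMatch k d1 d2) : Setoid (T3 k) :=
  ⟨S0r d1 d2, ⟨S0r_refl, S0r_symm, fun hxy hyz => S0r_trans hm hxy hyz⟩⟩

lemma rel_embT {a b : Fin k ⊕ Fin k} (h : d1.r a b) :
    (stacked k d1 d2).r (embT k a) (embT k b) :=
  (le_sup_left : extendSetoid (embT k) (embT_inj k) d1 ≤ stacked k d1 d2)
    (Or.inr ⟨a, b, h, rfl, rfl⟩)

lemma rel_embB {a b : Fin k ⊕ Fin k} (h : d2.r a b) :
    (stacked k d1 d2).r (embB k a) (embB k b) :=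
  (le_sup_right : extendSetoid (embB k) Sum.inr_injective d2 ≤ stacked k d1 d2)
    (Or.inr ⟨a, b, h, rfl, rfl⟩)

lemma stacked_iff (hm : rowMatch k d1 d2) (x y : T3 k) :
    (stacked k d1 d2).r x y ↔ S0r d1 d2 x y := by
  constructor
  · intro h
    have hle : stacked k d1 d2 ≤ S0 hm := by
      apply sup_le
      · rintro x y (rfl | ⟨a, b, hab, rfl, rfl⟩)
        · exact S0r_refl x
        · rcases a with a | a <;> rcases b with b | b <;> exact hab
      · rintro x y (rfl | ⟨a, b, hab, rfl, rfl⟩)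
        · exact S0r_refl x
        · rcases a with a | a <;> rcases b with b | b
          · exact (hm a b).mpr hab
          · exact hab
          · exact d2.iseqv.symm hab
          · exact hab
    exact hle h
  · intro h
    have hT : ∀ a b, d1.r a b → (stacked k d1 d2).r (embT k a) (embT k b) :=
      fun a b hab => rel_embT hab
    have hB : ∀ a b, d2.r a b → (stacked k d1 d2).r (embB k a) (embB k b) :=
      fun a b hab => rel_embB hab
    have tr : ∀ {a b c}, (stacked k d1 d2).r a b → (stacked k d1 d2).r b c → (stacked k d1 d2).r a c := fun h1 h2 => (stacked k d1 d2).iseqv.trans h1 h2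
    have sy : ∀ {a b}, (stacked k d1 d2).r a b → (stacked k d1 d2).r b a := fun h => (stacked k d1 d2).iseqv.symm h
    rcases x with a | t | b <;> rcases y with a' | t' | b'
    · exact hT (Sum.inl a) (Sum.inl a') h
    · exact hT (Sum.inl a) (Sum.inr t') h
    · obtain ⟨t, h1, h2⟩ := h
      exact tr (hT _ _ h1) (hB (Sum.inl t) (Sum.inr b') h2)
    · exact hT (Sum.inr t) (Sum.inl a') h
    · exact hT (Sum.inr t) (Sum.inr t') h
    · exact hB (Sum.inl t) (Sum.inr b') h
    · obtain ⟨t, h1, h2⟩ := h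
      exact sy (tr (hT _ _ h1) (hB (Sum.inl t) (Sum.inr b) h2))
    · exact sy (hB (Sum.inl t') (Sum.inr b) h)
    · exact hB (Sum.inr b) (Sum.inr b') h

lemma stackedT (hm : rowMatch k d1 d2) {a b : Fin k ⊕ Fin k}
    (h : (stacked k d1 d2).r (embT k a) (embT k b)) : d1.r a b := by
  have h' := (stacked_iff hm _ _).mp h
  rcases a with a | a <;> rcases b with b | b <;> exact h'

lemma stackedB (hm : rowMatch k d1 d2) {a b : Fin k ⊕ Fin k}
    (h : (stacked k d1 d2).r (embB k a) (embB k b)) : d2.r a b := by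
  have h' := (stacked_iff hm _ _).mp h
  rcases a with a | a <;> rcases b with b | b
  · exact (hm a b).mp h'
  · exact h'
  · exact d2.iseqv.symm h'
  · exact h'

end Statement6Aux

section Statement6Aux2

variable {k n : ℕ}

/-- The middle-extended tuple on the three-row diagram. -/
def Fm (c : Fin k ⊕ Fin k → Fin n) (m : Fin k → Fin n) : T3 k → Fin n :=
  Sum.elim (fun a => c (Sum.inl a)) (Sum.elim m fun a => c (Sum.inr a))

/-- `m` is a compatible middle tuple for the outer tuple `c`. -/
def Compat (d1 d2 : SP k) (c : Fin k ⊕ Fin k → Fin n) (m : Fin k → Fin n) : Prop :=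
  (∀ a b, d1.r a b ↔ Fm c m (embT k a) = Fm c m (embT k b)) ∧
  (∀ a b, d2.r a b ↔ Fm c m (embB k a) = Fm c m (embB k b))

variable {d1 d2 : SP k} {c : Fin k ⊕ Fin k → Fin n} {m : Fin k → Fin n}

lemma Fm_embO (c : Fin k ⊕ Fin k → Fin n) (m : Fin k → Fin n) :
    ∀ y, Fm c m (embO k y) = c y := by rintro (a | a) <;> rfl

lemma compat_const (h : Compat d1 d2 c m) {x y : T3 k}
    (hxy : (stacked k d1 d2).r x y) : Fm c m x = Fm c m y := by
  have hle : stacked k d1 d2 ≤ Setoid.ker (Fm c m) := by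
    apply sup_le
    · rintro x y (rfl | ⟨a, b, hab, rfl, rfl⟩)
      · rfl
      · exact (h.1 a b).mp hab
    · rintro x y (rfl | ⟨a, b, hab, rfl, rfl⟩)
      · rfl
      · exact (h.2 a b).mp hab
  exact hle hxy

/-- A block of the stacked diagram entirely inside the middle row. -/
def PMid (d1 d2 : SP k) (q : Quotient (stacked k d1 d2)) : Prop :=
  ∀ x, Quotient.mk (stacked k d1 d2) x = q → ∃ i : Fin k, x = Sum.inr (Sum.inl i)

lemma midCount_eq (d1 d2 : SP k) :
    midCount k d1 d2 = Nat.card {q : Quotient (stacked k d1 d2) // PMid d1 d2 q} := rfl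

/-- The value function on stacked blocks induced by a compatible middle tuple. -/
def vD (h : Compat d1 d2 c m) : Quotient (stacked k d1 d2) → Fin n :=
  Quotient.lift (Fm c m) fun _ _ hxy => compat_const h hxy

lemma vD_not_range (h : Compat d1 d2 c m) {q : Quotient (stacked k d1 d2)}
    (hq : PMid d1 d2 q) : vD h q ∉ Set.range c := by
  obtain ⟨x, rfl⟩ := Quotient.exists_rep q
  obtain ⟨t, rfl⟩ := hq x rfl
  rintro ⟨y, hy⟩
  rcases y with a | a
  · have h1 : d1.r (Sum.inl a) (Sum.inr t) := (h.1 (Sum.inl a) (Sum.inr t)).mpr hy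
    obtain ⟨i, hi⟩ := hq (Sum.inl a) (Quotient.sound (rel_embT h1))
    exact absurd hi (by simp)
  · have h1 : d2.r (Sum.inr a) (Sum.inl t) := (h.2 (Sum.inr a) (Sum.inl t)).mpr hy
    obtain ⟨i, hi⟩ := hq (Sum.inr (Sum.inr a)) (Quotient.sound (rel_embB h1))
    exact absurd hi (by simp)

lemma vD_inj_PM (h : Compat d1 d2 c m) {q q' : Quotient (stacked k d1 d2)}
    (hq : PMid d1 d2 q) (hq' : PMid d1 d2 q') (hv : vD h q = vD h q') : q = q' := by
  obtain ⟨x, rfl⟩ := Quotient.exists_rep q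
  obtain ⟨x', rfl⟩ := Quotient.exists_rep q'
  obtain ⟨t, rfl⟩ := hq x rfl
  obtain ⟨t', rfl⟩ := hq' x' rfl
  exact Quotient.sound (rel_embT ((h.1 (Sum.inr t) (Sum.inr t')).mpr hv))

lemma not_PMid_outer (d1 d2 : SP k) (q : Quotient (stacked k d1 d2))
    (hq : ¬ PMid d1 d2 q) :
    ∃ y : Fin k ⊕ Fin k, Quotient.mk (stacked k d1 d2) (embO k y) = q := by
  unfold PMid at hq
  push_neg at hq
  obtain ⟨x, hx, hxm⟩ := hq
  rcases x with a | t | b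
  · exact ⟨Sum.inl a, hx⟩
  · exact (hxm t rfl).elim
  · exact ⟨Sum.inr b, hx⟩

lemma cross_pair (h : Compat d1 d2 c m) {a b : Fin k}
    (hab : c (Sum.inl a) = c (Sum.inr b))
    (hns : ¬ (stacked k d1 d2).r (Sum.inl a) (Sum.inr (Sum.inr b))) :
    topOnly d1 (Quotient.mk d1 (Sum.inl a)) ∧ botOnly d2 (Quotient.mk d2 (Sum.inr b)) := by
  have tr : ∀ {x y z}, (stacked k d1 d2).r x y → (stacked k d1 d2).r y z →
      (stacked k d1 d2).r x z := fun h1 h2 => (stacked k d1 d2).iseqv.trans h1 h2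
  constructor
  · intro z hz
    rcases z with i | t
    · exact ⟨i, rfl⟩
    · exfalso
      have h1 : d1.r (Sum.inr t) (Sum.inl a) := Quotient.exact hz
      have h2 : Fm c m (Sum.inr (Sum.inl t)) = c (Sum.inl a) :=
        (h.1 (Sum.inr t) (Sum.inl a)).mp h1
      have h3 : d2.r (Sum.inl t) (Sum.inr b) :=
        (h.2 (Sum.inl t) (Sum.inr b)).mpr
          (show Fm c m (Sum.inr (Sum.inl t)) = c (Sum.inr b) from h2.trans hab)
      exact hns (tr (rel_embT (d1.iseqv.symm h1)) (rel_embB h3))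
  · intro z hz
    rcases z with t | i
    · exfalso
      have h1 : d2.r (Sum.inl t) (Sum.inr b) := Quotient.exact hz
      have h2 : Fm c m (Sum.inr (Sum.inl t)) = c (Sum.inr b) :=
        (h.2 (Sum.inl t) (Sum.inr b)).mp h1
      have h3 : d1.r (Sum.inl a) (Sum.inr t) :=
        (h.1 (Sum.inl a) (Sum.inr t)).mpr
          (show c (Sum.inl a) = Fm c m (Sum.inr (Sum.inl t)) from hab.trans h2.symm)
      exact hns (tr (rel_embT h3) (rel_embB h1))
    · exact ⟨i, rfl⟩

lemma compat_coarsening (h : Compat d1 d2 c m) :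
    IsCoarsening k d1 d2 (Setoid.ker c) := by
  classical
  have v1const : ∀ a b, d1.r a b → Fm c m (embT k a) = Fm c m (embT k b) :=
    fun a b hab => (h.1 a b).mp hab
  set v1 : Quotient d1 → Fin n := Quotient.lift (fun a => Fm c m (embT k a)) v1const with hv1
  set v2 : Quotient d2 → Fin n :=
    Quotient.lift (fun a => Fm c m (embB k a)) (fun a b hab => (h.2 a b).mp hab) with hv2
  have v1inj : Function.Injective v1 := by
    intro q q'
    induction q using Quotient.ind
    induction q' using Quotient.ind
    intro hv
    exact Quotient.sound ((h.1 _ _).mpr hv)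
  have v2inj : Function.Injective v2 := by
    intro q q'
    induction q using Quotient.ind
    induction q' using Quotient.ind
    intro hv
    exact Quotient.sound ((h.2 _ _).mpr hv)
  set Pset : Set (Quotient d1 × Quotient d2) :=
    {pr | topOnly d1 pr.1 ∧ botOnly d2 pr.2 ∧ v1 pr.1 = v2 pr.2} with hPset
  refine ⟨(Set.toFinite Pset).toFinset, ?_, ?_, ?_, ?_⟩
  · intro pr hpr
    rw [Set.Finite.mem_toFinset] at hpr
    exact ⟨hpr.1, hpr.2.1⟩
  · intro pr hpr pr' hpr' h1
    rw [Set.Finite.mem_toFinset] at hpr hpr'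
    have : pr.2 = pr'.2 := v2inj (hpr.2.2.symm.trans (h1 ▸ hpr'.2.2))
    exact Prod.ext h1 this
  · intro pr hpr pr' hpr' h2
    rw [Set.Finite.mem_toFinset] at hpr hpr'
    have : pr.1 = pr'.1 := v1inj (hpr.2.2.trans (h2 ▸ hpr'.2.2.symm))
    exact Prod.ext this h2
  · intro x y
    constructor
    · intro hxy
      by_cases hcomp : (compSetoid k d1 d2).r x y
      · exact Or.inl hcomp
      · have hxy' : c x = c y := hxy
        rcases x with a | a <;> rcases y with b | b
        · exfalso
          exact hcomp (rel_embT ((h.1 (Sum.inl a) (Sum.inl b)).mpr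
            (by rw [show Fm c m (embT k (Sum.inl a)) = c (Sum.inl a) from rfl,
              show Fm c m (embT k (Sum.inl b)) = c (Sum.inl b) from rfl, hxy'])))
        · have hns : ¬ (stacked k d1 d2).r (Sum.inl a) (Sum.inr (Sum.inr b)) := hcomp
          obtain ⟨htop, hbot⟩ := cross_pair h hxy' hns
          refine Or.inr ⟨(Quotient.mk d1 (Sum.inl a), Quotient.mk d2 (Sum.inr b)), ?_, rfl, rfl⟩
          rw [Set.Finite.mem_toFinset]
          exact ⟨htop, hbot, hxy'⟩
        · have hns : ¬ (stacked k d1 d2).r (Sum.inl b) (Sum.inr (Sum.inr a)) := by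
            intro hrel
            exact hcomp ((stacked k d1 d2).iseqv.symm hrel)
          obtain ⟨htop, hbot⟩ := cross_pair h hxy'.symm hns
          refine Or.inr ⟨(Quotient.mk d1 (Sum.inl b), Quotient.mk d2 (Sum.inr a)), ?_, rfl, rfl⟩
          rw [Set.Finite.mem_toFinset]
          exact ⟨htop, hbot, hxy'.symm⟩
        · exfalso
          exact hcomp (rel_embB ((h.2 (Sum.inr a) (Sum.inr b)).mpr
            (by rw [show Fm c m (embB k (Sum.inr a)) = c (Sum.inr a) from rfl,
              show Fm c m (embB k (Sum.inr b)) = c (Sum.inr b) from rfl, hxy'])))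
    · rintro (hcomp | ⟨pr, hpr, hx, hy⟩)
      · show c x = c y
        rw [← Fm_embO c m x, ← Fm_embO c m y]
        exact compat_const h hcomp
      · rw [Set.Finite.mem_toFinset] at hpr
        have key : ∀ z, memPair d1 d2 z pr → c z = v1 pr.1 := by
          rintro (a | a) hz
          · have : Quotient.mk d1 (Sum.inl a) = pr.1 := hz
            rw [← this]
            rfl
          · have h2 : Quotient.mk d2 (Sum.inr a) = pr.2 := hz
            rw [hpr.2.2, ← h2]
            rfl
        show c x = c y
        rw [key x hx, key y hy]

end Statement6Aux2

section Statement6Aux3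

variable {k n : ℕ} {d1 d2 : SP k}

lemma pair_case_top (hm : rowMatch k d1 d2) {pr : Quotient d1 × Quotient d2}
    (htop : topOnly d1 pr.1) (hbot : botOnly d2 pr.2) {u a : Fin k ⊕ Fin k}
    (hu : memPair d1 d2 u pr)
    (hrel : (stacked k d1 d2).r (embO k u) (embT k a)) :
    ∃ a0, a = Sum.inl a0 ∧ Quotient.mk d1 (Sum.inl a0) = pr.1 := by
  have hS := (stacked_iff hm _ _).mp hrel
  rcases u with u0 | u0
  · have hu' : Quotient.mk d1 (Sum.inl u0) = pr.1 := hu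
    rcases a with a0 | s
    · have hd : d1.r (Sum.inl u0) (Sum.inl a0) := hS
      exact ⟨a0, rfl, (Quotient.sound (d1.iseqv.symm hd)).trans hu'⟩
    · have hd : d1.r (Sum.inl u0) (Sum.inr s) := hS
      obtain ⟨i, hi⟩ := htop (Sum.inr s) ((Quotient.sound (d1.iseqv.symm hd)).trans hu')
      exact absurd hi (by simp)
  · have hu' : Quotient.mk d2 (Sum.inr u0) = pr.2 := hu
    rcases a with a0 | s
    · obtain ⟨t, _, h2⟩ := hS
      obtain ⟨i, hi⟩ := hbot (Sum.inl t) ((Quotient.sound h2).trans hu')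
      exact absurd hi (by simp)
    · have hd : d2.r (Sum.inl s) (Sum.inr u0) := hS
      obtain ⟨i, hi⟩ := hbot (Sum.inl s) ((Quotient.sound hd).trans hu')
      exact absurd hi (by simp)

lemma pair_case_bot (hm : rowMatch k d1 d2) {pr : Quotient d1 × Quotient d2}
    (htop : topOnly d1 pr.1) (hbot : botOnly d2 pr.2) {u a : Fin k ⊕ Fin k}
    (hu : memPair d1 d2 u pr)
    (hrel : (stacked k d1 d2).r (embO k u) (embB k a)) :
    ∃ a0, a = Sum.inr a0 ∧ Quotient.mk d2 (Sum.inr a0) = pr.2 := by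
  have hS := (stacked_iff hm _ _).mp hrel
  rcases u with u0 | u0
  · have hu' : Quotient.mk d1 (Sum.inl u0) = pr.1 := hu
    rcases a with s | a0
    · have hd : d1.r (Sum.inl u0) (Sum.inr s) := hS
      obtain ⟨i, hi⟩ := htop (Sum.inr s) ((Quotient.sound (d1.iseqv.symm hd)).trans hu')
      exact absurd hi (by simp)
    · obtain ⟨t, h1, _⟩ := hS
      obtain ⟨i, hi⟩ := htop (Sum.inr t) ((Quotient.sound (d1.iseqv.symm h1)).trans hu')
      exact absurd hi (by simp)
  · have hu' : Quotient.mk d2 (Sum.inr u0) = pr.2 := hu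
    rcases a with s | a0
    · have hd : d2.r (Sum.inl s) (Sum.inr u0) := hS
      obtain ⟨i, hi⟩ := hbot (Sum.inl s) ((Quotient.sound hd).trans hu')
      exact absurd hi (by simp)
    · have hd : d2.r (Sum.inr u0) (Sum.inr a0) := hS
      exact ⟨a0, rfl, (Quotient.sound (d2.iseqv.symm hd)).trans hu'⟩

lemma count_compat (hm : rowMatch k d1 d2) (c : Fin k ⊕ Fin k → Fin n)
    (hco : IsCoarsening k d1 d2 (Setoid.ker c)) :
    Nat.card {m : Fin k → Fin n // Compat d1 d2 c m}
      = (Nat.card {v : Fin n // v ∉ Set.range c}).descFactorial (midCount k d1 d2) := by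
  classical
  obtain ⟨P, hP1, hP2, hP3, hP4⟩ := hco
  let fwd : {m : Fin k → Fin n // Compat d1 d2 c m} →
      ({q : Quotient (stacked k d1 d2) // PMid d1 d2 q} ↪ {v : Fin n // v ∉ Set.range c}) :=
    fun mm => ⟨fun q => ⟨vD mm.2 q.1, vD_not_range mm.2 q.2⟩,
      fun q q' hqq => Subtype.ext (vD_inj_PM mm.2 q.2 q'.2
        (congrArg Subtype.val hqq))⟩
  have hbij : Function.Bijective fwd := by
    constructor
    · rintro ⟨m, hmc⟩ ⟨m', hmc'⟩ hf
      have hf' : ∀ (q) (hq : PMid d1 d2 q), vD hmc q = vD hmc' q := by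
        intro q hq
        have h0 := congrFun (congrArg (fun (e : {q : Quotient (stacked k d1 d2) //
          PMid d1 d2 q} ↪ {v : Fin n // v ∉ Set.range c}) => (e : _ → _)) hf) ⟨q, hq⟩
        exact congrArg Subtype.val h0
      refine Subtype.ext (funext fun t => ?_)
      by_cases hq : PMid d1 d2 (Quotient.mk (stacked k d1 d2) (Sum.inr (Sum.inl t)))
      · exact hf' _ hq
      · obtain ⟨y, hy⟩ := not_PMid_outer d1 d2 _ hq
        have e1 : c y = m t := (Fm_embO c m y).symm.trans (compat_const hmc (Quotient.exact hy))
        have e2 : c y = m' t := (Fm_embO c m' y).symm.trans (compat_const hmc' (Quotient.exact hy))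
        exact e1.symm.trans e2
    · intro g
      have hOuter := not_PMid_outer d1 d2
      set val : Quotient (stacked k d1 d2) → Fin n := fun q =>
        if hq : PMid d1 d2 q then (g ⟨q, hq⟩).1
        else c (Classical.choose (hOuter q hq)) with hval
      set m : Fin k → Fin n :=
        fun t => val (Quotient.mk (stacked k d1 d2) (Sum.inr (Sum.inl t))) with hmdef
      have hvalc : ∀ (q) (hq : ¬ PMid d1 d2 q) (y : Fin k ⊕ Fin k),
          Quotient.mk (stacked k d1 d2) (embO k y) = q → val q = c y := by
        intro q hq y hy
        rw [hval]
        dsimp only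
        rw [dif_neg hq]
        have hsp := Classical.choose_spec (hOuter q hq)
        have hrel : (stacked k d1 d2).r (embO k (Classical.choose (hOuter q hq))) (embO k y) :=
          Quotient.exact (hsp.trans hy.symm)
        exact (hP4 _ _).mpr (Or.inl hrel)
      have hFval : ∀ x, Fm c m x = val (Quotient.mk (stacked k d1 d2) x) := by
        rintro (a | t | b)
        · by_cases hq : PMid d1 d2 (Quotient.mk (stacked k d1 d2) (Sum.inl a))
          · obtain ⟨i, hi⟩ := hq (Sum.inl a) rfl
            exact absurd hi (by simp)
          · exact (hvalc _ hq (Sum.inl a) rfl).symm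
        · rfl
        · by_cases hq : PMid d1 d2 (Quotient.mk (stacked k d1 d2) (Sum.inr (Sum.inr b)))
          · obtain ⟨i, hi⟩ := hq (Sum.inr (Sum.inr b)) rfl
            exact absurd hi (by simp)
          · exact (hvalc _ hq (Sum.inr b) rfl).symm
      have tr : ∀ {x y z}, (stacked k d1 d2).r x y → (stacked k d1 d2).r y z →
          (stacked k d1 d2).r x z := fun h1 h2 => (stacked k d1 d2).iseqv.trans h1 h2
      have sy : ∀ {x y}, (stacked k d1 d2).r x y → (stacked k d1 d2).r y x :=
        fun h1 => (stacked k d1 d2).iseqv.symm h1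
      have hcompat : Compat d1 d2 c m := by
        constructor
        · intro a b
          rw [hFval (embT k a), hFval (embT k b)]
          constructor
          · intro hab
            exact congrArg val (Quotient.sound (rel_embT hab))
          · intro hv
            by_cases ha : PMid d1 d2 (Quotient.mk (stacked k d1 d2) (embT k a)) <;>
              by_cases hb : PMid d1 d2 (Quotient.mk (stacked k d1 d2) (embT k b))
            · rw [hval] at hv
              dsimp only at hv
              rw [dif_pos ha, dif_pos hb] at hv
              have h0 := g.injective (Subtype.ext hv)
              exact stackedT hm (Quotient.exact (congrArg Subtype.val h0))
            · exfalso
              rw [hval] at hv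
              dsimp only at hv
              rw [dif_pos ha, dif_neg hb] at hv
              exact (g ⟨_, ha⟩).2 ⟨_, hv.symm⟩
            · exfalso
              rw [hval] at hv
              dsimp only at hv
              rw [dif_neg ha, dif_pos hb] at hv
              exact (g ⟨_, hb⟩).2 ⟨_, hv⟩
            · have hya := Classical.choose_spec (hOuter _ ha)
              have hyb := Classical.choose_spec (hOuter _ hb)
              have hca := hvalc _ ha _ hya
              have hcb := hvalc _ hb _ hyb
              have hc : (Setoid.ker c).r (Classical.choose (hOuter _ ha))
                  (Classical.choose (hOuter _ hb)) := by
                show c _ = c _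
                rw [← hca, ← hcb, hv]
              rcases (hP4 _ _).mp hc with hcomp | ⟨pr, hpr, hxa, hxb⟩
              · exact stackedT hm (tr (sy (Quotient.exact hya))
                  (tr hcomp (Quotient.exact hyb)))
              · obtain ⟨a0, ha0, ha0q⟩ := pair_case_top hm (hP1 pr hpr).1 (hP1 pr hpr).2
                  hxa (Quotient.exact hya)
                obtain ⟨b0, hb0, hb0q⟩ := pair_case_top hm (hP1 pr hpr).1 (hP1 pr hpr).2
                  hxb (Quotient.exact hyb)
                subst ha0; subst hb0
                exact Quotient.exact (ha0q.trans hb0q.symm)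
        · intro a b
          rw [hFval (embB k a), hFval (embB k b)]
          constructor
          · intro hab
            exact congrArg val (Quotient.sound (rel_embB hab))
          · intro hv
            by_cases ha : PMid d1 d2 (Quotient.mk (stacked k d1 d2) (embB k a)) <;>
              by_cases hb : PMid d1 d2 (Quotient.mk (stacked k d1 d2) (embB k b))
            · rw [hval] at hv
              dsimp only at hv
              rw [dif_pos ha, dif_pos hb] at hv
              have h0 := g.injective (Subtype.ext hv)
              exact stackedB hm (Quotient.exact (congrArg Subtype.val h0))
            · exfalso
              rw [hval] at hv
              dsimp only at hv
              rw [dif_pos ha, dif_neg hb] at hv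
              exact (g ⟨_, ha⟩).2 ⟨_, hv.symm⟩
            · exfalso
              rw [hval] at hv
              dsimp only at hv
              rw [dif_neg ha, dif_pos hb] at hv
              exact (g ⟨_, hb⟩).2 ⟨_, hv⟩
            · have hya := Classical.choose_spec (hOuter _ ha)
              have hyb := Classical.choose_spec (hOuter _ hb)
              have hca := hvalc _ ha _ hya
              have hcb := hvalc _ hb _ hyb
              have hc : (Setoid.ker c).r (Classical.choose (hOuter _ ha))
                  (Classical.choose (hOuter _ hb)) := by
                show c _ = c _
                rw [← hca, ← hcb, hv]
              rcases (hP4 _ _).mp hc with hcomp | ⟨pr, hpr, hxa, hxb⟩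
              · exact stackedB hm (tr (sy (Quotient.exact hya))
                  (tr hcomp (Quotient.exact hyb)))
              · obtain ⟨a0, ha0, ha0q⟩ := pair_case_bot hm (hP1 pr hpr).1 (hP1 pr hpr).2
                  hxa (Quotient.exact hya)
                obtain ⟨b0, hb0, hb0q⟩ := pair_case_bot hm (hP1 pr hpr).1 (hP1 pr hpr).2
                  hxb (Quotient.exact hyb)
                subst ha0; subst hb0
                exact Quotient.exact (ha0q.trans hb0q.symm)
      refine ⟨⟨m, hcompat⟩, ?_⟩
      refine DFunLike.ext _ _ fun q => Subtype.ext ?_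
      show vD hcompat q.1 = (g q).1
      have hvq : ∀ q', vD hcompat q' = val q' := by
        intro q'
        induction q' using Quotient.ind with
        | _ x => exact hFval x
      rw [hvq, hval]
      dsimp only
      rw [dif_pos q.2]
  rw [Nat.card_eq_of_bijective fwd hbij, midCount_eq]
  haveI : Fintype {q : Quotient (stacked k d1 d2) // PMid d1 d2 q} := Fintype.ofFinite _
  haveI : Fintype {v : Fin n // v ∉ Set.range c} := Fintype.ofFinite _
  rw [Nat.card_eq_fintype_card, Nat.card_eq_fintype_card, Nat.card_eq_fintype_card,
    Fintype.card_embedding_eq]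

end Statement6Aux3

section Statement6Aux4

variable {k n : ℕ}

lemma kernelMap_apply (K : (Fin k → Fin n) → (Fin k → Fin n) → ℂ) (f : TP n k)
    (o : Fin k → Fin n) : kernelMap n k K f o = ∑ i, K o i * f i := rfl

lemma kernelMap_comp (K1 K2 : (Fin k → Fin n) → (Fin k → Fin n) → ℂ) :
    kernelMap n k K2 ∘ₗ kernelMap n k K1 =
      kernelMap n k fun o i => ∑ m, K2 o m * K1 m i := by
  refine LinearMap.ext fun f => funext fun o => ?_
  show ∑ m, K2 o m * (∑ i, K1 m i * f i) = ∑ i, (∑ m, K2 o m * K1 m i) * f i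
  calc ∑ m, K2 o m * ∑ i, K1 m i * f i
      = ∑ m, ∑ i, K2 o m * (K1 m i * f i) := by
        exact Finset.sum_congr rfl fun m _ => Finset.mul_sum _ _ _
    _ = ∑ i, ∑ m, K2 o m * (K1 m i * f i) := Finset.sum_comm
    _ = ∑ i, (∑ m, K2 o m * K1 m i) * f i := by
        refine Finset.sum_congr rfl fun i _ => ?_
        rw [Finset.sum_mul]
        exact Finset.sum_congr rfl fun m _ => by ring

lemma kernelMap_zero : kernelMap n k (fun _ _ => (0 : ℂ)) = 0 := by
  refine LinearMap.ext fun f => funext fun o => ?_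
  show ∑ i : Fin k → Fin n, (0 : ℂ) * f i = 0
  simp

lemma kernelMap_add (K K' : (Fin k → Fin n) → (Fin k → Fin n) → ℂ) :
    kernelMap n k K + kernelMap n k K' = kernelMap n k fun o i => K o i + K' o i := by
  refine LinearMap.ext fun f => funext fun o => ?_
  show (∑ i, K o i * f i) + ∑ i, K' o i * f i = ∑ i, (K o i + K' o i) * f i
  rw [← Finset.sum_add_distrib]
  exact Finset.sum_congr rfl fun i _ => by ring

lemma kernelMap_smul (z : ℂ) (K : (Fin k → Fin n) → (Fin k → Fin n) → ℂ) :
    z • kernelMap n k K = kernelMap n k fun o i => z * K o i := by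
  refine LinearMap.ext fun f => funext fun o => ?_
  show z * ∑ i, K o i * f i = ∑ i, (z * K o i) * f i
  rw [Finset.mul_sum]
  exact Finset.sum_congr rfl fun i _ => by ring

lemma kernelMap_sum {ι : Type*} (s : Finset ι)
    (K : ι → (Fin k → Fin n) → (Fin k → Fin n) → ℂ) :
    ∑ d ∈ s, kernelMap n k (K d) = kernelMap n k fun o i => ∑ d ∈ s, K d o i := by
  classical
  induction s using Finset.cons_induction with
  | empty => simp only [Finset.sum_empty]; exact kernelMap_zero.symm
  | cons a s ha ih =>
    simp only [Finset.sum_cons]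
    rw [ih, kernelMap_add]

lemma nBlocks_ker (c : Fin k ⊕ Fin k → Fin n) :
    nBlocks (Setoid.ker c) = Nat.card (Set.range c) :=
  Nat.card_congr (Setoid.quotientKerEquivRange c)

lemma nBlocks_ker_le (c : Fin k ⊕ Fin k → Fin n) : nBlocks (Setoid.ker c) ≤ n := by
  rw [nBlocks_ker]
  have h1 : Nat.card (Set.range c) ≤ Nat.card (Fin n) :=
    Nat.card_le_card_of_injective _ Subtype.val_injective
  simpa using h1

lemma card_not_range (c : Fin k ⊕ Fin k → Fin n) :
    Nat.card {v : Fin n // v ∉ Set.range c} = n - nBlocks (Setoid.ker c) := by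
  classical
  rw [nBlocks_ker]
  rw [Nat.card_eq_fintype_card, Nat.card_eq_fintype_card,
    Fintype.card_subtype_compl, Fintype.card_fin]

lemma fallingC_natCast (N b : ℕ) : fallingC (N : ℤ) b = (N.descFactorial b : ℤ) := by
  induction b with
  | zero => simp [fallingC]
  | succ b ih =>
    simp only [fallingC] at ih ⊢
    rw [Finset.prod_range_succ, ih, Nat.descFactorial_succ]
    rcases le_or_gt b N with h | h
    · push_cast [Nat.cast_sub h]
      ring
    · simp [Nat.descFactorial_eq_zero_iff_lt.mpr h]

lemma coeX_eq {t : ℕ} (d : SP t) (c : Fin t ⊕ Fin t → Fin n) :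
    coeX n t d c = if d = Setoid.ker c then 1 else 0 := by
  unfold coeX
  refine if_congr ?_ rfl rfl
  constructor
  · exact fun h => Setoid.ext h
  · rintro rfl a b
    exact Iff.rfl

lemma finite_SP : Finite (SP k) :=
  Finite.of_injective (fun s : SP k => s.r)
    (fun s t h => Setoid.ext fun a b => iff_of_eq (congrFun (congrFun h a) b))

end Statement6Aux4

/-- Structure constants of the partition algebra in the basis
`{x_d}` : if the bottom row of `d₁` does not match the top row of `d₂` the product
vanishes, while if it matches it equals the sum, over all coarsenings `d` of
`d₁ ∘ d₂` obtained by merging top-only blocks of `d₁` with bottom-only blocks of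
`d₂` along an injective partial matching, of `(n - |d|)_{[d₁∘d₂]} • φ_k(x_d)`. -/
theorem statement6 (n k : ℕ) (hn : 0 < n) (hk : 0 < k) (d1 d2 : SP k) :
    (¬ rowMatch k d1 d2 → phiX n k d2 ∘ₗ phiX n k d1 = 0) ∧
    (rowMatch k d1 d2 →
      phiX n k d2 ∘ₗ phiX n k d1 =
        ∑ᶠ (d : SP k) (_ : IsCoarsening k d1 d2 d),
          ((fallingC ((n : ℤ) - (nBlocks d : ℤ)) (midCount k d1 d2) : ℤ) : ℂ) •
            phiX n k d) := by
  classical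
  have hlhs : phiX n k d2 ∘ₗ phiX n k d1 = kernelMap n k
      fun o i => ∑ m, coeX n k d2 (Sum.elim m o) * coeX n k d1 (Sum.elim i m) :=
    kernelMap_comp _ _
  constructor
  · intro hnm
    rw [hlhs]
    have h2 : (fun o i => ∑ m, coeX n k d2 (Sum.elim m o) * coeX n k d1 (Sum.elim i m)) =
        fun _ _ => (0 : ℂ) := by
      funext o i
      refine Finset.sum_eq_zero fun m _ => ?_
      by_contra h0
      rcases mul_ne_zero_iff.mp h0 with ⟨h2a, h1a⟩
      unfold coeX at h2a h1a
      have c2 : ∀ a b, d2.r a b ↔ Sum.elim m o a = Sum.elim m o b := by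
        by_contra hc
        rw [if_neg hc] at h2a
        exact h2a rfl
      have c1 : ∀ a b, d1.r a b ↔ Sum.elim i m a = Sum.elim i m b := by
        by_contra hc
        rw [if_neg hc] at h1a
        exact h1a rfl
      refine hnm fun s t => ?_
      rw [c1 (Sum.inr s) (Sum.inr t), c2 (Sum.inl s) (Sum.inl t)]
      exact Iff.rfl
    rw [h2, kernelMap_zero]
  · intro hm
    haveI : Finite (SP k) := finite_SP
    haveI : Fintype (SP k) := Fintype.ofFinite _
    have hrhs : (∑ᶠ (d : SP k) (_ : IsCoarsening k d1 d2 d),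
        ((fallingC ((n : ℤ) - (nBlocks d : ℤ)) (midCount k d1 d2) : ℤ) : ℂ) • phiX n k d) =
        ∑ d : SP k, if IsCoarsening k d1 d2 d then
          ((fallingC ((n : ℤ) - (nBlocks d : ℤ)) (midCount k d1 d2) : ℤ) : ℂ) • phiX n k d
        else 0 := by
      rw [finsum_eq_sum_of_fintype]
      exact Finset.sum_congr rfl fun d _ => finsum_eq_if
    have hsummand : ∀ d : SP k, (if IsCoarsening k d1 d2 d then
        ((fallingC ((n : ℤ) - (nBlocks d : ℤ)) (midCount k d1 d2) : ℤ) : ℂ) • phiX n k d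
        else 0) = kernelMap n k fun o i => if IsCoarsening k d1 d2 d then
          ((fallingC ((n : ℤ) - (nBlocks d : ℤ)) (midCount k d1 d2) : ℤ) : ℂ) *
            coeX n k d (Sum.elim i o) else 0 := by
      intro d
      by_cases hd : IsCoarsening k d1 d2 d
      · simp only [if_pos hd]
        exact kernelMap_smul _ _
      · simp only [if_neg hd]
        exact kernelMap_zero.symm
    have hstep : (∑ d : SP k, if IsCoarsening k d1 d2 d then
        ((fallingC ((n : ℤ) - (nBlocks d : ℤ)) (midCount k d1 d2) : ℤ) : ℂ) • phiX n k d
        else 0) = kernelMap n k fun o i => ∑ d : SP k, if IsCoarsening k d1 d2 d then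
          ((fallingC ((n : ℤ) - (nBlocks d : ℤ)) (midCount k d1 d2) : ℤ) : ℂ) *
            coeX n k d (Sum.elim i o) else 0 := by
      rw [Finset.sum_congr rfl fun d _ => hsummand d, kernelMap_sum]
    rw [hlhs, hrhs, hstep]
    congr 1
    funext o i
    set c : Fin k ⊕ Fin k → Fin n := Sum.elim i o with hc
    have hL : (∑ m : Fin k → Fin n, coeX n k d2 (Sum.elim m o) * coeX n k d1 (Sum.elim i m))
        = ((Nat.card {m : Fin k → Fin n // Compat d1 d2 c m} : ℕ) : ℂ) := by
      have hterm : ∀ m : Fin k → Fin n, coeX n k d2 (Sum.elim m o) * coeX n k d1 (Sum.elim i m)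
          = if Compat d1 d2 c m then 1 else 0 := by
        intro m
        unfold coeX Compat
        have e1 : ∀ a b : Fin k ⊕ Fin k,
            (Sum.elim i m a = Sum.elim i m b) = (Fm c m (embT k a) = Fm c m (embT k b)) := by
          rintro (a | a) (b | b) <;> rfl
        have e2 : ∀ a b : Fin k ⊕ Fin k,
            (Sum.elim m o a = Sum.elim m o b) = (Fm c m (embB k a) = Fm c m (embB k b)) := by
          rintro (a | a) (b | b) <;> rfl
        simp only [e1, e2]
        rcases Classical.em (∀ a b, d1.r a b ↔ Fm c m (embT k a) = Fm c m (embT k b)) with h1 | h1 <;>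
          rcases Classical.em (∀ a b, d2.r a b ↔ Fm c m (embB k a) = Fm c m (embB k b)) with h2 | h2
        · rw [if_pos h1, if_pos h2, if_pos ⟨h1, h2⟩]; ring
        · rw [if_pos h1, if_neg h2, if_neg (fun hh => h2 hh.2)]; ring
        · rw [if_neg h1, if_pos h2, if_neg (fun hh => h1 hh.1)]; ring
        · rw [if_neg h1, if_neg h2, if_neg (fun hh => h1 hh.1)]; ring
      rw [Finset.sum_congr rfl fun m _ => hterm m, Finset.sum_boole,
        Nat.card_eq_fintype_card, Fintype.card_subtype]
    have hR : (∑ d : SP k, if IsCoarsening k d1 d2 d then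
        ((fallingC ((n : ℤ) - (nBlocks d : ℤ)) (midCount k d1 d2) : ℤ) : ℂ) *
          coeX n k d (Sum.elim i o) else 0)
        = if IsCoarsening k d1 d2 (Setoid.ker c) then
          ((fallingC ((n : ℤ) - (nBlocks (Setoid.ker c) : ℤ)) (midCount k d1 d2) : ℤ) : ℂ)
        else 0 := by
      have hterm : ∀ d : SP k, (if IsCoarsening k d1 d2 d then
          ((fallingC ((n : ℤ) - (nBlocks d : ℤ)) (midCount k d1 d2) : ℤ) : ℂ) *
            coeX n k d (Sum.elim i o) else 0)
          = if d = Setoid.ker c then (if IsCoarsening k d1 d2 d then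
              ((fallingC ((n : ℤ) - (nBlocks d : ℤ)) (midCount k d1 d2) : ℤ) : ℂ) else 0)
            else 0 := by
        intro d
        rw [coeX_eq d c]
        by_cases hco : IsCoarsening k d1 d2 d <;> by_cases hk2 : d = Setoid.ker c <;>
          simp [hco, hk2]
      rw [Finset.sum_congr rfl fun d _ => hterm d,
        Finset.sum_ite_eq' Finset.univ (Setoid.ker c), if_pos (Finset.mem_univ _)]
    rw [hL, hR]
    by_cases hco : IsCoarsening k d1 d2 (Setoid.ker c)
    · rw [if_pos hco, count_compat hm c hco, card_not_range]
      have hle := nBlocks_ker_le c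
      rw [show ((n : ℤ) - (nBlocks (Setoid.ker c) : ℤ))
          = ((n - nBlocks (Setoid.ker c) : ℕ) : ℤ) from (Nat.cast_sub hle).symm,
        fallingC_natCast]
      push_cast
      ring
    · rw [if_neg hco]
      haveI : IsEmpty {m : Fin k → Fin n // Compat d1 d2 c m} :=
        ⟨fun mm => hco (compat_coarsening mm.2)⟩
      rw [Nat.card_of_isEmpty]
      norm_num

end Tanabe
end
end

section
/- Let r, p, n be positive integers with p dividing r. Let W be an irreducible finite-dimensional complex representation of G(r,1,n), and let U_1 and U_2 be G(r,p,n)-invariant subspaces of W that are irreducible as representations of G(r,p,n). Then U_1 and U_2 are isomorphic as representations of L(r,p,n). -/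
open scoped Classical
open Matrix

noncomputable section

namespace Tanabe

/-! ### Auxiliary material for statement9 -/

section Aux9

/-- Weights of the diagonal element `z = diag(1,…,1,ζ)`. -/
def zWt (r n : ℕ) (hn : 0 < n) : Fin n → ℂ :=
  fun i => if i = lastIdx n hn then zeta r else 1

lemma zWt_ne_zero' (r n : ℕ) (hn : 0 < n) (i : Fin n) : zWt r n hn i ≠ 0 := by
  unfold zWt; split_ifs
  · exact zeta_ne_zero r
  · exact one_ne_zero

lemma zWt_pow_r (r n : ℕ) (hr : 0 < r) (hn : 0 < n) (i : Fin n) :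
    zWt r n hn i ^ r = 1 := by
  unfold zWt; split_ifs
  · exact zeta_pow_self hr
  · exact one_pow r

lemma zWt_prod (r n : ℕ) (hn : 0 < n) : (∏ i, zWt r n hn i) = zeta r := by
  unfold zWt
  rw [Finset.prod_ite_eq' Finset.univ (lastIdx n hn) (fun _ => zeta r)]
  simp

/-- The unit `z = diag(1,…,1,ζ)`. -/
def zUnit (r n : ℕ) (hn : 0 < n) : GLn n :=
  monoUnit n 1 (zWt r n hn) (zWt_ne_zero' r n hn)

lemma zUnit_mem (r n : ℕ) (hr : 0 < r) (hn : 0 < n) :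
    ((zUnit r n hn : GLn n) : Matrix (Fin n) (Fin n) ℂ) ∈ GSet r 1 n := by
  refine ⟨1, zWt r n hn, zWt_pow_r r n hr hn, ?_, rfl⟩
  rw [Nat.div_one, zWt_prod r n hn]
  exact zeta_pow_self hr

/-- The element `z` of `G(r,1,n)`. -/
def zEl (r n : ℕ) (hr : 0 < r) (hn : 0 < n) : ↥(GGroup r 1 n hr) :=
  ⟨zUnit r n hn, zUnit_mem r n hr hn⟩

lemma monoMat_one_pow (n : ℕ) (a : Fin n → ℂ) (k : ℕ) :
    monoMat n 1 a ^ k = monoMat n 1 (fun i => a i ^ k) := by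
  induction k with
  | zero =>
    rw [pow_zero]
    simp only [pow_zero]
    exact (monoMat_one n).symm
  | succ k ih =>
    rw [pow_succ, ih, monoMat_mul, one_mul]
    congr 1

lemma zEl_pow_val (r n : ℕ) (hr : 0 < r) (hn : 0 < n) (w : ℕ) :
    ((↑(zEl r n hr hn ^ w) : GLn n) : Matrix (Fin n) (Fin n) ℂ)
      = monoMat n 1 (fun i => zWt r n hn i ^ w) := by
  have h1 : ((↑(zEl r n hr hn ^ w) : GLn n) : Matrix (Fin n) (Fin n) ℂ)
      = (((zEl r n hr hn : GLn n)) : Matrix (Fin n) (Fin n) ℂ) ^ w := by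
    norm_cast
  rw [h1]
  show monoMat n 1 (zWt r n hn) ^ w = _
  exact monoMat_one_pow n _ w

lemma zEl_pow_r (r n : ℕ) (hr : 0 < r) (hn : 0 < n) : zEl r n hr hn ^ r = 1 := by
  apply Subtype.ext
  apply Units.ext
  show ((↑(zEl r n hr hn ^ r) : GLn n) : Matrix (Fin n) (Fin n) ℂ) = _
  rw [zEl_pow_val r n hr hn r]
  have hfun : (fun i => zWt r n hn i ^ r) = fun _ : Fin n => (1 : ℂ) := by
    funext i; exact zWt_pow_r r n hr hn i
  rw [hfun, monoMat_one]
  rfl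

/-- Membership of the underlying matrix in `GSet r p n`. -/
def memN (r p n : ℕ) (hr : 0 < r) (h : ↥(GGroup r 1 n hr)) : Prop :=
  ((h : GLn n) : Matrix (Fin n) (Fin n) ℂ) ∈ GSet r p n

lemma matrix_mul_unit_cancel {n : ℕ} (u : GLn n) {X Y : Matrix (Fin n) (Fin n) ℂ}
    (h : X * (u : Matrix (Fin n) (Fin n) ℂ) = Y * (u : Matrix (Fin n) (Fin n) ℂ)) :
    X = Y := by
  have h3 : ∀ Z : Matrix (Fin n) (Fin n) ℂ,
      Z * (u : Matrix (Fin n) (Fin n) ℂ) * ((u⁻¹ : GLn n) : Matrix (Fin n) (Fin n) ℂ)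
        = Z := by
    intro Z
    rw [mul_assoc, ← Units.val_mul, mul_inv_cancel, Units.val_one, mul_one]
  rw [← h3 X, ← h3 Y, h]

lemma mono_diag_swap {r p n : ℕ} (hr : 0 < r) (b : Fin n → ℂ) (hbr : ∀ i, b i ^ r = 1)
    {M : Matrix (Fin n) (Fin n) ℂ} (hM : M ∈ GSet r p n) :
    ∃ M' ∈ GSet r p n, monoMat n 1 b * M = M' * monoMat n 1 b := by
  have hb : ∀ i, b i ≠ 0 := fun i => a_ne_zero hr (hbr i)
  obtain ⟨π, a, ha, hpa, rfl⟩ := hM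
  have hbprod : (∏ i, b i) ≠ 0 := Finset.prod_ne_zero_iff.mpr fun i _ => hb i
  refine ⟨monoMat n π (fun j => b (π j) * a j * (b j)⁻¹), ?_, ?_⟩
  · refine ⟨π, fun j => b (π j) * a j * (b j)⁻¹, ?_, ?_, rfl⟩
    · intro i
      rw [mul_pow, mul_pow, hbr, ha, inv_pow, hbr]
      norm_num
    · have hprod : (∏ j, b (π j) * a j * (b j)⁻¹)
          = (∏ j, b (π j)) * (∏ j, a j) * (∏ j, (b j)⁻¹) := by
        rw [Finset.prod_mul_distrib, Finset.prod_mul_distrib]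
      rw [hprod, Equiv.prod_comp π b, Finset.prod_inv_distrib]
      rw [mul_comm (∏ i, b i) (∏ j, a j), mul_assoc,
        mul_inv_cancel₀ hbprod, mul_one]
      exact hpa
  · rw [monoMat_mul, monoMat_mul, one_mul, mul_one]
    have hw : (fun j => (fun j => b (π j) * a j * (b j)⁻¹) ((1 : Equiv.Perm (Fin n)) j) * b j)
        = fun j => b (π j) * a j := by
      funext j
      show b (π j) * a j * (b j)⁻¹ * b j = b (π j) * a j
      rw [mul_assoc, mul_assoc, inv_mul_cancel₀ (hb j), mul_one]
    rw [hw]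

/-- Hypothesis: `u` is a diagonal matrix with `r`-th root of unity entries. -/
def IsDiagR (r n : ℕ) (hr : 0 < r) (u : ↥(GGroup r 1 n hr)) : Prop :=
  ∃ b : Fin n → ℂ, (∀ i, b i ^ r = 1) ∧
    ((u : GLn n) : Matrix (Fin n) (Fin n) ℂ) = monoMat n 1 b

lemma zEl_pow_isDiagR (r n : ℕ) (hr : 0 < r) (hn : 0 < n) (w : ℕ) :
    IsDiagR r n hr (zEl r n hr hn ^ w) := by
  refine ⟨fun i => zWt r n hn i ^ w, fun i => ?_, zEl_pow_val r n hr hn w⟩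
  rw [← pow_mul, mul_comm, pow_mul, zWt_pow_r r n hr hn, one_pow]

lemma isDiagR_inv {r n : ℕ} {hr : 0 < r} {u : ↥(GGroup r 1 n hr)}
    (hu : IsDiagR r n hr u) : IsDiagR r n hr u⁻¹ := by
  obtain ⟨b, hbr, hum⟩ := hu
  have hb : ∀ i, b i ≠ 0 := fun i => a_ne_zero hr (hbr i)
  refine ⟨fun i => (b i)⁻¹, fun i => by rw [inv_pow, hbr, inv_one], ?_⟩
  have h1 : ((↑(u⁻¹) : GLn n) : Matrix (Fin n) (Fin n) ℂ)
      = ((((u : GLn n))⁻¹ : GLn n) : Matrix (Fin n) (Fin n) ℂ) := by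
    norm_cast
  rw [h1, gl_inv_val (u : GLn n) 1 b hb hum,
    show (1 : Equiv.Perm (Fin n))⁻¹ = 1 from inv_one]
  rfl

lemma conj_left {r p n : ℕ} (hr : 0 < r) {u h : ↥(GGroup r 1 n hr)}
    (hu : IsDiagR r n hr u) (hh : memN r p n hr h) :
    ∃ h' : ↥(GGroup r 1 n hr), memN r p n hr h' ∧ u * h = h' * u := by
  obtain ⟨b, hbr, hum⟩ := hu
  obtain ⟨M', hM', heq⟩ := mono_diag_swap hr b hbr hh
  refine ⟨u * h * u⁻¹, ?_, by group⟩
  have hval : ((↑(u * h * u⁻¹) : GLn n) : Matrix (Fin n) (Fin n) ℂ) = M' := by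
    apply matrix_mul_unit_cancel (u : GLn n)
    have h1 : ((↑(u * h * u⁻¹) : GLn n) : Matrix (Fin n) (Fin n) ℂ)
          * ((u : GLn n) : Matrix (Fin n) (Fin n) ℂ)
        = ((↑(u * h) : GLn n) : Matrix (Fin n) (Fin n) ℂ) := by
      norm_cast
      rw [inv_mul_cancel_right]
    rw [h1]
    have h2 : ((↑(u * h) : GLn n) : Matrix (Fin n) (Fin n) ℂ)
        = ((u : GLn n) : Matrix (Fin n) (Fin n) ℂ)
          * ((h : GLn n) : Matrix (Fin n) (Fin n) ℂ) := by norm_cast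
    rw [h2, hum, heq]
  show ((↑(u * h * u⁻¹) : GLn n) : Matrix (Fin n) (Fin n) ℂ) ∈ GSet r p n
  rw [hval]; exact hM'

lemma conj_right {r p n : ℕ} (hr : 0 < r) {u h : ↥(GGroup r 1 n hr)}
    (hu : IsDiagR r n hr u) (hh : memN r p n hr h) :
    ∃ h' : ↥(GGroup r 1 n hr), memN r p n hr h' ∧ h * u = u * h' := by
  obtain ⟨h', hh', heq⟩ := conj_left hr (isDiagR_inv hu) hh
  refine ⟨h', hh', ?_⟩
  have := congrArg (fun x => u * x * u) heq
  simpa [mul_assoc] using this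

end Aux9
section Aux9b

lemma zEl_comm_L (r p n : ℕ) (hr : 0 < r) (hn : 0 < n) (h : ↥(GGroup r 1 n hr))
    (hL : ((h : GLn n) : Matrix (Fin n) (Fin n) ℂ) ∈ LSet r p n hn) :
    Commute (zEl r n hr hn) h := by
  obtain ⟨⟨π, a, ha, hpa, hH⟩, hne⟩ := hL
  apply Subtype.ext
  apply Units.ext
  have hval : ∀ x y : ↥(GGroup r 1 n hr),
      ((↑(x * y) : GLn n) : Matrix (Fin n) (Fin n) ℂ)
        = ((x : GLn n) : Matrix (Fin n) (Fin n) ℂ)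
          * ((y : GLn n) : Matrix (Fin n) (Fin n) ℂ) := fun x y => by norm_cast
  rw [hval, hval]
  have hzval : ((zEl r n hr hn : GLn n) : Matrix (Fin n) (Fin n) ℂ)
      = monoMat n 1 (zWt r n hn) := rfl
  rw [hzval, hH]
  rw [hH] at hne
  obtain ⟨hπ, -⟩ := monoMat_last hn π a hne
  have hw : ∀ j, zWt r n hn (π j) = zWt r n hn j := by
    intro j
    by_cases hj : j = lastIdx n hn
    · subst hj; rw [hπ]
    · have hπj : π j ≠ lastIdx n hn := fun hc => hj (π.injective (hc.trans hπ.symm))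
      simp [zWt, hπj, hj]
  rw [monoMat_mul, monoMat_mul, one_mul, mul_one]
  have hww : (fun j => a ((1 : Equiv.Perm (Fin n)) j) * zWt r n hn j)
      = fun j => zWt r n hn (π j) * a j := by
    funext j
    show a j * zWt r n hn j = zWt r n hn (π j) * a j
    rw [hw j, mul_comm]
  rw [hww]

lemma decomposeG (r p n : ℕ) (hr : 0 < r) (hp : 0 < p) (hn : 0 < n) (hpr : p ∣ r)
    (g : ↥(GGroup r 1 n hr)) :
    ∃ (h : ↥(GGroup r 1 n hr)) (w : ℕ),
      memN r p n hr h ∧ g = h * zEl r n hr hn ^ w := by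
  have hg : ((g : GLn n) : Matrix (Fin n) (Fin n) ℂ) ∈ GSet r 1 n := g.2
  obtain ⟨π, a, ha, hpa, hgm⟩ := hg
  rw [Nat.div_one] at hpa
  have hrne : (r : ℂ) ≠ 0 := Nat.cast_ne_zero.mpr hr.ne'
  have hpne : (p : ℂ) ≠ 0 := Nat.cast_ne_zero.mpr hp.ne'
  have hm : r / p * p = r := Nat.div_mul_cancel hpr
  -- ζ^(r/p) is a primitive p-th root of unity
  have hprim : IsPrimitiveRoot (zeta r ^ (r / p)) p := by
    have hz : zeta r ^ (r / p) = Complex.exp (2 * Real.pi * Complex.I / p) := by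
      rw [zeta, ← Complex.exp_nat_mul]
      congr 1
      field_simp
      exact_mod_cast hm
    rw [hz]
    exact Complex.isPrimitiveRoot_exp p hp.ne'
  have hx : ((∏ i, a i) ^ (r / p)) ^ p = 1 := by
    rw [← pow_mul, hm, hpa]
  haveI : NeZero p := ⟨hp.ne'⟩
  obtain ⟨w, hwlt, hw⟩ := hprim.eq_pow_of_pow_eq_one hx
  have hxne : (∏ i, a i) ^ (r / p) ≠ 0 := by
    rw [← hw]
    exact pow_ne_zero _ (pow_ne_zero _ (zeta_ne_zero r))
  refine ⟨g * (zEl r n hr hn ^ w)⁻¹, w, ?_, by rw [inv_mul_cancel_right]⟩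
  -- compute the matrix of g * (z^w)⁻¹
  have hzw : ((↑(zEl r n hr hn ^ w) : GLn n) : Matrix (Fin n) (Fin n) ℂ)
      = monoMat n 1 (fun i => zWt r n hn i ^ w) := zEl_pow_val r n hr hn w
  have hcne : ∀ i, zWt r n hn i ^ w ≠ 0 :=
    fun i => pow_ne_zero _ (zWt_ne_zero' r n hn i)
  have hinv : ((↑((zEl r n hr hn ^ w)⁻¹) : GLn n) : Matrix (Fin n) (Fin n) ℂ)
      = monoMat n 1 (fun i => (zWt r n hn i ^ w)⁻¹) := by
    have h1 : ((↑((zEl r n hr hn ^ w)⁻¹) : GLn n) : Matrix (Fin n) (Fin n) ℂ)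
        = (((↑(zEl r n hr hn ^ w) : GLn n))⁻¹ : GLn n) := by norm_cast
    rw [h1, gl_inv_val _ 1 _ hcne hzw,
      show (1 : Equiv.Perm (Fin n))⁻¹ = 1 from inv_one]
    rfl
  have hval : ((↑(g * (zEl r n hr hn ^ w)⁻¹) : GLn n) : Matrix (Fin n) (Fin n) ℂ)
      = monoMat n π (fun j => a j * (zWt r n hn j ^ w)⁻¹) := by
    have h2 : ((↑(g * (zEl r n hr hn ^ w)⁻¹) : GLn n) : Matrix (Fin n) (Fin n) ℂ)
        = ((g : GLn n) : Matrix (Fin n) (Fin n) ℂ)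
          * ((↑((zEl r n hr hn ^ w)⁻¹) : GLn n) : Matrix (Fin n) (Fin n) ℂ) := by
      norm_cast
    rw [h2, hgm, hinv, monoMat_mul, mul_one]
    rfl
  show ((↑(g * (zEl r n hr hn ^ w)⁻¹) : GLn n) : Matrix (Fin n) (Fin n) ℂ) ∈ GSet r p n
  rw [hval]
  refine ⟨π, _, fun i => ?_, ?_, rfl⟩
  · rw [mul_pow, ha, inv_pow, ← pow_mul, mul_comm w r, pow_mul,
      zWt_pow_r r n hr hn, one_pow, inv_one, one_mul]
  · have hprodc : (∏ i, zWt r n hn i ^ w) = zeta r ^ w := by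
      rw [Finset.prod_pow, zWt_prod r n hn]
    have hsplit : (∏ j, a j * (zWt r n hn j ^ w)⁻¹)
        = (∏ j, a j) * (zeta r ^ w)⁻¹ := by
      rw [Finset.prod_mul_distrib, Finset.prod_inv_distrib, hprodc]
    rw [hsplit]
    have hkey : ((∏ j, a j) * (zeta r ^ w)⁻¹) ^ (r / p)
        = ((∏ j, a j) ^ (r / p)) * (((zeta r ^ (r / p)) ^ w)⁻¹) := by
      rw [mul_pow]
      congr 1
      rw [← inv_pow, ← inv_pow, ← inv_pow, ← pow_mul, ← pow_mul, mul_comm w (r / p)]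
    rw [hkey, hw]
    exact mul_inv_cancel₀ hxne

/-- The subgroup `G(r,p,n)` inside `G(r,1,n)`. -/
def NGrp (r p n : ℕ) (hr : 0 < r) : Subgroup ↥(GGroup r 1 n hr) :=
  (GGroup r p n hr).subgroupOf (GGroup r 1 n hr)

lemma mem_NGrp {r p n : ℕ} {hr : 0 < r} {g : ↥(GGroup r 1 n hr)} :
    g ∈ NGrp r p n hr ↔ memN r p n hr g :=
  Subgroup.mem_subgroupOf

lemma GSet_entry {r p n : ℕ} {M : Matrix (Fin n) (Fin n) ℂ} (hM : M ∈ GSet r p n)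
    (i j : Fin n) : M i j ^ r = 1 ∨ M i j = 0 := by
  obtain ⟨π, a, ha, hpa, rfl⟩ := hM
  by_cases h : i = π j
  · left; simp [monoMat, h, ha]
  · right; simp [monoMat, h]

lemma finite_NGrp (r p n : ℕ) (hr : 0 < r) : Finite ↥(NGrp r p n hr) := by
  have h1 : {x : ℂ | x ^ r = 1 ∨ x = 0}.Finite := by
    have h2 : {x : ℂ | x ^ r = 1}.Finite := by
      apply Set.Finite.subset (Polynomial.nthRoots r (1 : ℂ)).toFinset.finite_toSet
      intro x hx
      rw [Finset.mem_coe, Multiset.mem_toFinset, Polynomial.mem_nthRoots hr]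
      exact hx
    have h3 : {x : ℂ | x ^ r = 1 ∨ x = 0}
        ⊆ {x : ℂ | x ^ r = 1} ∪ {0} := by
      intro x hx
      rcases hx with hx | hx
      · exact Or.inl hx
      · exact Or.inr hx
    exact Set.Finite.subset (h2.union (Set.finite_singleton 0)) h3
  haveI : Finite ↥{x : ℂ | x ^ r = 1 ∨ x = 0} := h1.to_subtype
  have key : ∀ g : ↥(NGrp r p n hr), ∀ i j : Fin n,
      (((g : ↥(GGroup r 1 n hr)) : GLn n) : Matrix (Fin n) (Fin n) ℂ) i j
        ∈ {x : ℂ | x ^ r = 1 ∨ x = 0} :=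
    fun g i j => GSet_entry (mem_NGrp.mp g.2) i j
  let F : ↥(NGrp r p n hr) → (Fin n → Fin n → ↥{x : ℂ | x ^ r = 1 ∨ x = 0}) :=
    fun g i j => ⟨_, key g i j⟩
  have hinj : Function.Injective F := by
    intro g g' hgg
    apply Subtype.ext
    apply Subtype.ext
    apply Units.ext
    ext i j
    exact congrArg Subtype.val (congrFun (congrFun hgg i) j)
  exact Finite.of_injective F hinj

section Avg

variable {V : Type} [AddCommGroup V] [Module ℂ V]

section RepLemmas

variable {G : Type*} [Group G]

lemma rep_mul_apply (ρ : Representation ℂ G V) (a b : G) (v : V) :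
    ρ (a * b) v = ρ a (ρ b v) := by
  rw [_root_.map_mul]; rfl

lemma rep_inv_apply (ρ : Representation ℂ G V) (a : G) (v : V) :
    ρ a⁻¹ (ρ a v) = v := by
  rw [← rep_mul_apply, inv_mul_cancel, _root_.map_one]; rfl

lemma rep_apply_inv (ρ : Representation ℂ G V) (a : G) (v : V) :
    ρ a (ρ a⁻¹ v) = v := by
  rw [← rep_mul_apply, mul_inv_cancel, _root_.map_one]; rfl

end RepLemmas

variable {G : Type} [Group G] [Fintype G]

/-- The averaged projection. -/
def avgP (ρ : Representation ℂ G V) (π0 : V →ₗ[ℂ] V) : V →ₗ[ℂ] V :=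
  (Fintype.card G : ℂ)⁻¹ • ∑ g : G, (ρ g ∘ₗ π0) ∘ₗ ρ g⁻¹

lemma avgP_apply (ρ : Representation ℂ G V) (π0 : V →ₗ[ℂ] V) (v : V) :
    avgP ρ π0 v = (Fintype.card G : ℂ)⁻¹ • ∑ g : G, ρ g (π0 (ρ g⁻¹ v)) := by
  unfold avgP
  rw [LinearMap.smul_apply, LinearMap.sum_apply]
  rfl

lemma avgP_mem (ρ : Representation ℂ G V) (U : Submodule ℂ V)
    (hU : ∀ g : G, ∀ v ∈ U, ρ g v ∈ U) (π0 : V →ₗ[ℂ] V)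
    (hπ0 : ∀ v, π0 v ∈ U) (v : V) : avgP ρ π0 v ∈ U := by
  rw [avgP_apply]
  exact U.smul_mem _ (Submodule.sum_mem _ fun g _ => hU g _ (hπ0 _))

lemma avgP_id (ρ : Representation ℂ G V) (U : Submodule ℂ V)
    (hU : ∀ g : G, ∀ v ∈ U, ρ g v ∈ U) (π0 : V →ₗ[ℂ] V)
    (hπ1 : ∀ v ∈ U, π0 v = v) {v : V} (hv : v ∈ U) : avgP ρ π0 v = v := by
  rw [avgP_apply]
  have hterm : ∀ g : G, ρ g (π0 (ρ g⁻¹ v)) = v := fun g => by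
    rw [hπ1 _ (hU g⁻¹ v hv), rep_apply_inv]
  rw [Finset.sum_congr rfl fun g _ => hterm g, Finset.sum_const, Finset.card_univ]
  haveI : Nonempty G := ⟨1⟩
  have hcard : ((Fintype.card G : ℕ) : ℂ) ≠ 0 :=
    Nat.cast_ne_zero.mpr Fintype.card_ne_zero
  rw [← Nat.cast_smul_eq_nsmul ℂ, smul_smul, inv_mul_cancel₀ hcard, one_smul]

lemma avgP_comm (ρ : Representation ℂ G V) (π0 : V →ₗ[ℂ] V) (g : G) (v : V) :
    avgP ρ π0 (ρ g v) = ρ g (avgP ρ π0 v) := by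
  rw [avgP_apply, avgP_apply, _root_.map_smul, _root_.map_sum]
  congr 1
  refine Fintype.sum_equiv (Equiv.mulLeft g).symm
    (fun x => ρ x (π0 (ρ x⁻¹ (ρ g v)))) (fun h => ρ g (ρ h (π0 (ρ h⁻¹ v)))) fun x => ?_
  have e1 : ((Equiv.mulLeft g).symm x : G) = g⁻¹ * x := rfl
  show ρ x (π0 (ρ x⁻¹ (ρ g v))) = ρ g (ρ (g⁻¹ * x) (π0 (ρ (g⁻¹ * x)⁻¹ v)))
  rw [_root_.mul_inv_rev, inv_inv, rep_mul_apply ρ x⁻¹ g v,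
    ← rep_mul_apply ρ g (g⁻¹ * x), mul_inv_cancel_left]

end Avg

end Aux9b
/-- If `W` is an irreducible finite-dimensional complex
representation of `G(r,1,n)` and `U₁, U₂` are `G(r,p,n)`-invariant subspaces which
are irreducible as `G(r,p,n)`-representations, then `U₁ ≅ U₂` as representations of
`L(r,p,n)`. -/
theorem statement9 (r p n : ℕ) (hr : 0 < r) (hp : 0 < p) (hn : 0 < n) (hpr : p ∣ r)
    (V : Type) [AddCommGroup V] [Module ℂ V] [FiniteDimensional ℂ V]
    (ρ : Representation ℂ ↥(GGroup r 1 n hr) V) (hirr : RepIrreducible ρ)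
    (U1 U2 : Submodule ℂ V)
    (hinv1 : RepInvariant (restrictRep (GGroup_le r p n hr) ρ) U1)
    (hinv2 : RepInvariant (restrictRep (GGroup_le r p n hr) ρ) U2)
    (hirr1 : SubIrreducible (restrictRep (GGroup_le r p n hr) ρ) U1)
    (hirr2 : SubIrreducible (restrictRep (GGroup_le r p n hr) ρ) U2) :
    IsSubrepIso (restrictRep (LGroup_le_G1 r p n hr hn) ρ) U1 U2 := by
  classical
  obtain ⟨hU1ne, hsub1⟩ := hirr1
  obtain ⟨hU2ne, hsub2⟩ := hirr2
  obtain ⟨-, hirrT⟩ := hirr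
  -- transfer of invariance between the two formulations
  have incl_eq : ∀ (h : ↥(GGroup r 1 n hr)) (hh : memN r p n hr h),
      Subgroup.inclusion (GGroup_le r p n hr) (⟨(h : GLn n), hh⟩ : ↥(GGroup r p n hr)) = h :=
    fun h hh => Subtype.ext rfl
  have hinv1' : ∀ h : ↥(GGroup r 1 n hr), memN r p n hr h → ∀ v ∈ U1, ρ h v ∈ U1 := by
    intro h hh v hv
    have h2 := hinv1 ⟨(h : GLn n), hh⟩ v hv
    have heq : restrictRep (GGroup_le r p n hr) ρ ⟨(h : GLn n), hh⟩ = ρ h := by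
      show ρ (Subgroup.inclusion (GGroup_le r p n hr) ⟨(h : GLn n), hh⟩) = ρ h
      rw [incl_eq]
    rwa [heq] at h2
  have hinv2' : ∀ h : ↥(GGroup r 1 n hr), memN r p n hr h → ∀ v ∈ U2, ρ h v ∈ U2 := by
    intro h hh v hv
    have h2 := hinv2 ⟨(h : GLn n), hh⟩ v hv
    have heq : restrictRep (GGroup_le r p n hr) ρ ⟨(h : GLn n), hh⟩ = ρ h := by
      show ρ (Subgroup.inclusion (GGroup_le r p n hr) ⟨(h : GLn n), hh⟩) = ρ h
      rw [incl_eq]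
    rwa [heq] at h2
  have inv_transfer : ∀ q : Submodule ℂ V,
      (∀ h : ↥(GGroup r 1 n hr), memN r p n hr h → ∀ v ∈ q, ρ h v ∈ q) →
      RepInvariant (restrictRep (GGroup_le r p n hr) ρ) q := by
    intro q hq g v hv
    have hmem : memN r p n hr (Subgroup.inclusion (GGroup_le r p n hr) g) := g.2
    exact hq _ hmem v hv
  -- finite group `N = G(r,p,n)` inside `G(r,1,n)`
  haveI : Finite ↥(NGrp r p n hr) := finite_NGrp r p n hr
  letI : Fintype ↥(NGrp r p n hr) := Fintype.ofFinite _
  set ρN : Representation ℂ ↥(NGrp r p n hr) V :=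
    MonoidHom.comp ρ (NGrp r p n hr).subtype with hρN
  -- equivariant projection onto U2
  obtain ⟨Uc, hUc⟩ := Submodule.exists_isCompl U2
  set π0 : V →ₗ[ℂ] V := U2.subtype ∘ₗ (U2.projectionOnto Uc hUc) with hπ0
  have hπ0mem : ∀ v : V, π0 v ∈ U2 := fun v => ((U2.projectionOnto Uc hUc) v).2
  have hπ0id : ∀ v ∈ U2, π0 v = v := by
    intro v hv
    show ((U2.projectionOnto Uc hUc) v : V) = v
    have h1 : (U2.projectionOnto Uc hUc) v = ⟨v, hv⟩ := by
      have h2 := Submodule.projectionOnto_apply_left hUc (⟨v, hv⟩ : U2)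
      simpa using h2
    rw [h1]
  have hUN : ∀ gN : ↥(NGrp r p n hr), ∀ v ∈ U2, ρN gN v ∈ U2 :=
    fun gN v hv => hinv2' ↑gN (mem_NGrp.mp gN.2) v hv
  set P : V →ₗ[ℂ] V := avgP ρN π0 with hP
  have hPmem : ∀ v, P v ∈ U2 := avgP_mem ρN U2 hUN π0 hπ0mem
  have hPid : ∀ v ∈ U2, P v = v := fun v hv => avgP_id ρN U2 hUN π0 hπ0id hv
  have hPcomm : ∀ h : ↥(GGroup r 1 n hr), memN r p n hr h →
      ∀ v, P (ρ h v) = ρ h (P v) := by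
    intro h hh v
    exact avgP_comm ρN π0 ⟨h, mem_NGrp.mpr hh⟩ v
  -- the span of the translates of U1 is everything
  have hMinv : RepInvariant ρ
      (⨆ i : Fin r, Submodule.map (ρ (zEl r n hr hn ^ (i : ℕ))) U1) := by
    intro g v hv
    obtain ⟨h, w, hh, rfl⟩ := decomposeG r p n hr hp hn hpr g
    refine Submodule.iSup_induction
      (motive := fun x => ρ (h * zEl r n hr hn ^ w) x ∈
        ⨆ i : Fin r, Submodule.map (ρ (zEl r n hr hn ^ (i : ℕ))) U1) _ hv ?_ ?_ ?_
    · rintro i x ⟨u, hu, rfl⟩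
      obtain ⟨h', hh', hcomm⟩ :=
        conj_right hr (zEl_pow_isDiagR r n hr hn (w + (i : ℕ))) hh
      have e1 : ρ (h * zEl r n hr hn ^ w) (ρ (zEl r n hr hn ^ (i : ℕ)) u)
          = ρ (zEl r n hr hn ^ ((w + (i : ℕ)) % r)) (ρ h' u) := by
        have harg : h * zEl r n hr hn ^ w * zEl r n hr hn ^ (i : ℕ)
            = zEl r n hr hn ^ ((w + (i : ℕ)) % r) * h' := by
          calc h * zEl r n hr hn ^ w * zEl r n hr hn ^ (i : ℕ)
              = h * zEl r n hr hn ^ (w + (i : ℕ)) := by rw [mul_assoc, ← pow_add]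
            _ = zEl r n hr hn ^ (w + (i : ℕ)) * h' := hcomm
            _ = zEl r n hr hn ^ ((w + (i : ℕ)) % r) * h' := by
                conv_lhs => rw [pow_eq_pow_mod _ (zEl_pow_r r n hr hn)]
        rw [← rep_mul_apply, ← rep_mul_apply, harg]
      rw [e1]
      exact Submodule.mem_iSup_of_mem (⟨(w + (i : ℕ)) % r, Nat.mod_lt _ hr⟩ : Fin r)
        (Submodule.mem_map_of_mem (hinv1' h' hh' u hu))
    · simp only [_root_.map_zero]; exact Submodule.zero_mem _
    · intro x y hx hy
      simp only [_root_.map_add]; exact Submodule.add_mem _ hx hy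
  have hMtop : (⨆ i : Fin r, Submodule.map (ρ (zEl r n hr hn ^ (i : ℕ))) U1) = ⊤ := by
    rcases hirrT _ hMinv with hbot | htop
    · exfalso
      apply hU1ne
      have hle : U1 ≤ ⨆ i : Fin r, Submodule.map (ρ (zEl r n hr hn ^ (i : ℕ))) U1 := by
        have h0 : Submodule.map (ρ (zEl r n hr hn ^ (((⟨0, hr⟩ : Fin r)) : ℕ))) U1 = U1 := by
          show Submodule.map (ρ (zEl r n hr hn ^ 0)) U1 = U1
          rw [pow_zero, _root_.map_one]
          exact Submodule.map_id U1
        conv_lhs => rw [← h0]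
        exact le_iSup (fun i : Fin r =>
          Submodule.map (ρ (zEl r n hr hn ^ (i : ℕ))) U1) ⟨0, hr⟩
      rw [hbot] at hle
      exact le_bot_iff.mp hle
    · exact htop
  -- invariance of the images under `P ∘ ρ(z^w)`
  have hDinv : ∀ w : ℕ, ∀ h : ↥(GGroup r 1 n hr), memN r p n hr h →
      ∀ v ∈ Submodule.map (P ∘ₗ ρ (zEl r n hr hn ^ w)) U1,
        ρ h v ∈ Submodule.map (P ∘ₗ ρ (zEl r n hr hn ^ w)) U1 := by
    intro w h hh v hv
    obtain ⟨x, hx, rfl⟩ := hv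
    obtain ⟨h', hh', hcomm⟩ := conj_right hr (zEl_pow_isDiagR r n hr hn w) hh
    refine ⟨ρ h' x, hinv1' h' hh' x hx, ?_⟩
    show P (ρ (zEl r n hr hn ^ w) (ρ h' x)) = ρ h (P (ρ (zEl r n hr hn ^ w) x))
    rw [← rep_mul_apply, ← hcomm, rep_mul_apply, hPcomm h hh]
  have hDle : ∀ w : ℕ, Submodule.map (P ∘ₗ ρ (zEl r n hr hn ^ w)) U1 ≤ U2 := by
    rintro w v ⟨x, hx, rfl⟩
    exact hPmem _
  have hU2le : U2 ≤
      ⨆ i : Fin r, Submodule.map (P ∘ₗ ρ (zEl r n hr hn ^ (i : ℕ))) U1 := by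
    intro x hx
    have hxM : x ∈ ⨆ i : Fin r, Submodule.map (ρ (zEl r n hr hn ^ (i : ℕ))) U1 := by
      rw [hMtop]; exact Submodule.mem_top
    have hPx : P x ∈
        ⨆ i : Fin r, Submodule.map (P ∘ₗ ρ (zEl r n hr hn ^ (i : ℕ))) U1 := by
      refine Submodule.iSup_induction
        (motive := fun y => P y ∈
          ⨆ i : Fin r, Submodule.map (P ∘ₗ ρ (zEl r n hr hn ^ (i : ℕ))) U1)
        _ hxM ?_ ?_ ?_
      · rintro i y ⟨u, hu, rfl⟩
        exact Submodule.mem_iSup_of_mem i ⟨u, hu, rfl⟩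
      · simp only [_root_.map_zero]; exact Submodule.zero_mem _
      · intro a b ha hb
        simp only [_root_.map_add]; exact Submodule.add_mem _ ha hb
    rwa [hPid x hx] at hPx
  -- there is a translate mapping onto U2
  have hex : ∃ i : Fin r,
      Submodule.map (P ∘ₗ ρ (zEl r n hr hn ^ (i : ℕ))) U1 = U2 := by
    by_contra hno
    push_neg at hno
    have hall : ∀ i : Fin r,
        Submodule.map (P ∘ₗ ρ (zEl r n hr hn ^ (i : ℕ))) U1 = ⊥ := by
      intro i
      rcases hsub2 _ (hDle (i : ℕ)) (inv_transfer _ (hDinv (i : ℕ))) with hb | ht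
      · exact hb
      · exact absurd ht (hno i)
    have hb2 : U2 ≤ ⊥ := hU2le.trans (iSup_le fun i => (hall i).le)
    exact hU2ne (le_bot_iff.mp hb2)
  obtain ⟨j, hDj⟩ := hex
  set T : V →ₗ[ℂ] V := P ∘ₗ ρ (zEl r n hr hn ^ (j : ℕ)) with hT
  have hT1 : ∀ x ∈ U1, T x ∈ U2 := fun x _ => hPmem _
  set F : ↥U1 →ₗ[ℂ] ↥U2 :=
    LinearMap.codRestrict U2 (T ∘ₗ U1.subtype) (fun c => hT1 ↑c c.2) with hF
  have hFval : ∀ x : ↥U1, (F x : V) = T ↑x := fun x => rfl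
  have hFsurj : Function.Surjective F := by
    rintro ⟨y, hy⟩
    rw [← hDj] at hy
    obtain ⟨x, hx, hxy⟩ := hy
    exact ⟨⟨x, hx⟩, Subtype.ext hxy⟩
  have hKinv : ∀ h : ↥(GGroup r 1 n hr), memN r p n hr h →
      ∀ v ∈ U1 ⊓ LinearMap.ker T, ρ h v ∈ U1 ⊓ LinearMap.ker T := by
    intro h hh v hv
    obtain ⟨hv1, hv2⟩ := hv
    obtain ⟨h', hh', hcomm⟩ := conj_left hr (zEl_pow_isDiagR r n hr hn (j : ℕ)) hh
    refine ⟨hinv1' h hh v hv1, ?_⟩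
    have hTv : T (ρ h v) = ρ h' (T v) := by
      rw [hT]
      show P (ρ (zEl r n hr hn ^ (j : ℕ)) (ρ h v))
        = ρ h' (P (ρ (zEl r n hr hn ^ (j : ℕ)) v))
      rw [← rep_mul_apply, hcomm, rep_mul_apply, hPcomm h' hh']
    show T (ρ h v) = 0
    rw [hTv, LinearMap.mem_ker.mp hv2, _root_.map_zero]
  have hKbot : U1 ⊓ LinearMap.ker T = ⊥ := by
    rcases hsub1 _ inf_le_left (inv_transfer _ hKinv) with hb | ht
    · exact hb
    · exfalso
      apply hU2ne
      rw [← hDj]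
      apply (Submodule.eq_bot_iff _).mpr
      rintro y ⟨x, hx, rfl⟩
      have hxk : x ∈ U1 ⊓ LinearMap.ker T := by rw [ht]; exact hx
      exact LinearMap.mem_ker.mp hxk.2
  have hFinj : Function.Injective F := by
    intro x y hxy
    have h0 : F (x - y) = 0 := by rw [map_sub, hxy, sub_self]
    have h1 : T ((x - y : ↥U1) : V) = 0 := by
      have h2 := congrArg (fun t : ↥U2 => (t : V)) h0
      simpa [hFval] using h2
    have h3 : ((x - y : ↥U1) : V) ∈ U1 ⊓ LinearMap.ker T := ⟨(x - y).2, h1⟩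
    rw [hKbot] at h3
    have h4 : x - y = 0 := Subtype.ext (by simpa using h3)
    exact sub_eq_zero.mp h4
  refine ⟨LinearEquiv.ofBijective F ⟨hFinj, hFsurj⟩, ?_⟩
  intro g x hx hgx
  set gb : ↥(GGroup r 1 n hr) := Subgroup.inclusion (LGroup_le_G1 r p n hr hn) g with hgb
  have hgbL : ((gb : GLn n) : Matrix (Fin n) (Fin n) ℂ) ∈ LSet r p n hn := g.2
  have hgbN : memN r p n hr gb := hgbL.1
  have hcommz : zEl r n hr hn ^ (j : ℕ) * gb = gb * zEl r n hr hn ^ (j : ℕ) :=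
    (zEl_comm_L r p n hr hn gb hgbL).pow_left (j : ℕ)
  show (LinearEquiv.ofBijective F ⟨hFinj, hFsurj⟩ ⟨ρ gb x, hgx⟩ : V)
      = ρ gb (LinearEquiv.ofBijective F ⟨hFinj, hFsurj⟩ ⟨x, hx⟩ : V)
  have he : ∀ (y : V) (hy : y ∈ U1),
      ((LinearEquiv.ofBijective F ⟨hFinj, hFsurj⟩ ⟨y, hy⟩ : ↥U2) : V) = T y :=
    fun y hy => rfl
  rw [he]
  show P (ρ (zEl r n hr hn ^ (j : ℕ)) (ρ gb x)) = ρ gb (P (ρ (zEl r n hr hn ^ (j : ℕ)) x))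
  rw [← rep_mul_apply, hcommz, rep_mul_apply, hPcomm gb hgbN]

end Tanabe
end
end
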